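/- arXiv:1402.1557 — 6 statements merged into one kernel-verified Lean document; each statement's English description precedes it below -/
import Mathlib

section
/- For every W ≥ 0, every integer k ≥ 1 and all 0 < a₁ ≤ a₂: P((ξ_i^{(a₁)})^{−1} > θ(I_i^{(a₁)} + W) for all 1 ≤ i ≤ k) ≤ P((ξ_i^{(a₂)})^{−1} > θ(I_i^{(a₂)} + W) for all 1 ≤ i ≤ k); that is, the probability p_k^W of successively decoding at least k users in the presence of noise power W is monotonically nondecreasing in the intensity coefficient a. -/
open MeasureTheory ProbabilityTheory Real

/-- Scale-monotonicity: for noise power `W ≥ 0` and intensity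
coefficients `0 < a₁ ≤ a₂`, the probability of successively decoding at least `k`
users is nondecreasing in the intensity coefficient. -/
theorem sic_scale_monotonicity
    {Ω : Type*} [MeasureSpace Ω] [IsProbabilityMeasure (ℙ : Measure Ω)]
    (β θ : ℝ) (hβ : β ∈ Set.Ioo (0:ℝ) 1) (hθ : 0 < θ)
    (E : ℕ → Ω → ℝ) (hEmeas : ∀ i, Measurable (E i))
    (hEindep : iIndepFun E ℙ)
    (hEdist : ∀ i, ∀ x : ℝ, 0 ≤ x → ℙ {ω | x < E i ω} = ENNReal.ofReal (Real.exp (-x)))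
    -- for each intensity coefficient a > 0, ξᵃ k = (T k / a)^(1/β)
    (ξ : ℝ → ℕ → Ω → ℝ)
    (hξ : ∀ a k ω, ξ a k ω = ((∑ i ∈ Finset.range k, E i ω) / a) ^ (1/β : ℝ))
    (I : ℝ → ℕ → Ω → ℝ) (hI : ∀ a k ω, I a k ω = ∑' j : ℕ, (ξ a (k + 1 + j) ω)⁻¹)
    (W : ℝ) (hW : 0 ≤ W)
    (k : ℕ) (hk : 1 ≤ k)
    (a₁ a₂ : ℝ) (ha₁ : 0 < a₁) (ha₁₂ : a₁ ≤ a₂) :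
    ℙ {ω | ∀ i, 1 ≤ i → i ≤ k → θ * (I a₁ i ω + W) < (ξ a₁ i ω)⁻¹}
      ≤ ℙ {ω | ∀ i, 1 ≤ i → i ≤ k → θ * (I a₂ i ω + W) < (ξ a₂ i ω)⁻¹} := by
  have ha₂ : 0 < a₂ := lt_of_lt_of_le ha₁ ha₁₂
  have hβ0 : 0 < (1/β : ℝ) := by
    have := hβ.1; positivity
  set G : Set Ω := {ω | ∀ i, 0 < E i ω} with hG
  -- G has full measure
  have hGc : ℙ Gᶜ = 0 := by
    have hsub : Gᶜ ⊆ ⋃ i, {ω | E i ω ≤ 0} := by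
      intro ω hω
      simp only [hG, Set.mem_compl_iff, Set.mem_setOf_eq, not_forall, not_lt] at hω
      obtain ⟨i, hi⟩ := hω
      exact Set.mem_iUnion.2 ⟨i, hi⟩
    refine measure_mono_null hsub (measure_iUnion_null fun i => ?_)
    have h1 : ℙ {ω | 0 < E i ω} = 1 := by
      have := hEdist i 0 le_rfl
      simpa using this
    have hmeas : MeasurableSet {ω | 0 < E i ω} :=
      measurableSet_lt measurable_const (hEmeas i)
    have : {ω | E i ω ≤ 0} = {ω | 0 < E i ω}ᶜ := by
      ext ω; simp [not_lt]
    rw [this, measure_compl hmeas (measure_ne_top _ _), h1, measure_univ, tsub_self]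
  -- pointwise inclusion on G
  have hincl : {ω | ∀ i, 1 ≤ i → i ≤ k → θ * (I a₁ i ω + W) < (ξ a₁ i ω)⁻¹}
      ⊆ {ω | ∀ i, 1 ≤ i → i ≤ k → θ * (I a₂ i ω + W) < (ξ a₂ i ω)⁻¹} ∪ Gᶜ := by
    intro ω hω
    by_cases hωG : ω ∈ G
    · left
      intro i hi1 hik
      have hT : ∀ j : ℕ, 1 ≤ j → 0 < ∑ l ∈ Finset.range j, E l ω := by
        intro j hj
        apply Finset.sum_pos (fun l _ => hωG l)
        exact Finset.nonempty_range_iff.2 (Nat.one_le_iff_ne_zero.1 hj)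
      -- rewrite ξ a j in factored form
      have hxi : ∀ a : ℝ, 0 < a → ∀ j : ℕ, 1 ≤ j →
          (ξ a j ω)⁻¹ = a ^ (1/β : ℝ) * ((∑ l ∈ Finset.range j, E l ω) ^ (1/β : ℝ))⁻¹ := by
        intro a ha j hj
        rw [hξ, Real.div_rpow (hT j hj).le ha.le]
        rw [inv_div]
        ring
      have hIfac : ∀ a : ℝ, 0 < a → I a i ω
          = a ^ (1/β : ℝ) * ∑' j : ℕ, (((∑ l ∈ Finset.range (i + 1 + j), E l ω) ^ (1/β : ℝ))⁻¹) := by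
        intro a ha
        rw [hI]
        rw [← tsum_mul_left]
        congr 1
        ext j
        exact hxi a ha (i + 1 + j) (by omega)
      set S := ∑' j : ℕ, (((∑ l ∈ Finset.range (i + 1 + j), E l ω) ^ (1/β : ℝ))⁻¹) with hS
      set u := ((∑ l ∈ Finset.range i, E l ω) ^ (1/β : ℝ))⁻¹ with hu
      have h1 := hω i hi1 hik
      rw [hIfac a₁ ha₁, hxi a₁ ha₁ i hi1] at h1
      rw [hIfac a₂ ha₂, hxi a₂ ha₂ i hi1]
      set c₁ := a₁ ^ (1/β : ℝ) with hc₁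
      set c₂ := a₂ ^ (1/β : ℝ) with hc₂
      have hc₁pos : 0 < c₁ := Real.rpow_pos_of_pos ha₁ _
      have hc₁₂ : c₁ ≤ c₂ := Real.rpow_le_rpow ha₁.le ha₁₂ hβ0.le
      -- h1 : θ * (c₁ * S + W) < c₁ * u ; goal : θ * (c₂ * S + W) < c₂ * u
      have hX : 0 < u - θ * S := by
        nlinarith [mul_nonneg hθ.le hW]
      nlinarith [mul_le_mul_of_nonneg_right hc₁₂ hX.le, mul_nonneg hθ.le hW]
    · right; exact hωG
  calc ℙ {ω | ∀ i, 1 ≤ i → i ≤ k → θ * (I a₁ i ω + W) < (ξ a₁ i ω)⁻¹}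
      ≤ ℙ ({ω | ∀ i, 1 ≤ i → i ≤ k → θ * (I a₂ i ω + W) < (ξ a₂ i ω)⁻¹} ∪ Gᶜ) :=
        measure_mono hincl
    _ ≤ ℙ {ω | ∀ i, 1 ≤ i → i ≤ k → θ * (I a₂ i ω + W) < (ξ a₂ i ω)⁻¹} + ℙ Gᶜ :=
        measure_union_le _ _
    _ = ℙ {ω | ∀ i, 1 ≤ i → i ≤ k → θ * (I a₂ i ω + W) < (ξ a₂ i ω)⁻¹} := by
        rw [hGc, add_zero]
end

section
/- The aggregate throughput R(θ) = log(1+θ) · Σ_{k=1}^∞ p_k(θ) satisfies limsup_{θ → 0⁺} R(θ) ≤ 1/β − 1. -/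
open MeasureTheory ProbabilityTheory Real Filter

open Set Topology
open scoped ENNReal

set_option linter.unusedSectionVars false

namespace SICaux

variable {Ω : Type*} [MeasureSpace Ω] [IsProbabilityMeasure (ℙ : Measure Ω)]

lemma map_eq_exp (X : Ω → ℝ) (hX : Measurable X)
    (hd : ∀ x : ℝ, 0 ≤ x → ℙ {ω | x < X ω} = ENNReal.ofReal (Real.exp (-x))) :
    Measure.map X ℙ = expMeasure 1 := by
  have hprob : IsProbabilityMeasure (expMeasure 1) := isProbabilityMeasure_expMeasure one_pos
  have hmap : IsProbabilityMeasure (Measure.map X ℙ) := Measure.isProbabilityMeasure_map hX.aemeasurable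
  have hpos : ℙ {ω | 0 < X ω} = 1 := by simpa using hd 0 le_rfl
  refine Measure.ext_of_Iic _ _ (fun a => ?_)
  rw [Measure.map_apply hX measurableSet_Iic]
  have hR : expMeasure 1 (Iic a) = ENNReal.ofReal (if 0 ≤ a then 1 - rexp (-(1 * a)) else 0) := by
    rw [← ofReal_cdf (expMeasure 1) a]
    congr 1
    exact cdf_expMeasure_eq one_pos a
  rcases le_or_gt 0 a with ha | ha
  · have hset : X ⁻¹' Iic a = {ω | a < X ω}ᶜ := by
      ext ω; simp [not_lt]
    rw [hset, prob_compl_eq_one_sub (measurableSet_lt measurable_const hX), hd a ha, hR, if_pos ha,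
      ENNReal.ofReal_sub 1 (exp_nonneg _), ENNReal.ofReal_one, one_mul]
  · have hnull : ℙ (X ⁻¹' Iic a) = 0 := by
      have hsub : X ⁻¹' Iic a ⊆ {ω | 0 < X ω}ᶜ := by
        intro ω hω; simp only [mem_preimage, mem_Iic] at hω
        simp only [mem_compl_iff, mem_setOf_eq, not_lt]; linarith
      refine measure_mono_null hsub ?_
      rw [prob_compl_eq_one_sub (measurableSet_lt measurable_const hX), hpos, tsub_self]
    rw [hnull, hR, if_neg (not_le.mpr ha), ENNReal.ofReal_zero]

lemma exp_indicator_eq {t : ℝ} :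
    (fun x => rexp (t * x) * (exponentialPDF 1 x).toReal)
      = Set.indicator (Ici (0:ℝ)) (fun x => rexp (-(1 - t) * x)) := by
  funext x
  rcases le_or_gt 0 x with hx | hx
  · rw [exponentialPDF_eq, if_pos hx, Set.indicator_of_mem (mem_Ici.mpr hx),
      ENNReal.toReal_ofReal (by positivity), one_mul, ← Real.exp_add]
    ring_nf
  · rw [exponentialPDF_eq, if_neg (not_le.mpr hx),
      Set.indicator_of_notMem (fun h => absurd (mem_Ici.mp h) (not_le.mpr hx)),
      ENNReal.ofReal_zero, ENNReal.toReal_zero, mul_zero]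

lemma measurable_expPDF : Measurable (exponentialPDF 1) := by
  exact (measurable_exponentialPDFReal 1).ennreal_ofReal

lemma integrable_exp_mul_exponential {t : ℝ} (ht : t < 1) :
    Integrable (fun x => rexp (t * x)) (expMeasure 1) := by
  have hb : 0 < 1 - t := by linarith
  rw [show expMeasure 1 = MeasureTheory.volume.withDensity (exponentialPDF 1) from rfl,
    integrable_withDensity_iff measurable_expPDF (ae_of_all _ fun x => ENNReal.ofReal_lt_top)]
  rw [exp_indicator_eq, integrable_indicator_iff measurableSet_Ici]
  exact Iff.mpr integrableOn_Ici_iff_integrableOn_Ioi (exp_neg_integrableOn_Ioi 0 hb)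

lemma integral_exp_mul_exponential {t : ℝ} (ht : t < 1) :
    ∫ x, rexp (t * x) ∂(expMeasure 1) = (1 - t)⁻¹ := by
  have hb : 0 < 1 - t := by linarith
  have hm : Measurable fun x : ℝ => rexp (t * x) := by fun_prop
  have h1 : ∫ x, rexp (t * x) ∂(expMeasure 1)
      = (∫⁻ x, ENNReal.ofReal (rexp (t * x)) ∂(expMeasure 1)).toReal :=
    integral_eq_lintegral_of_nonneg_ae (ae_of_all _ fun x => (exp_pos _).le)
      hm.aestronglyMeasurable
  rw [h1, show expMeasure 1 = MeasureTheory.volume.withDensity (exponentialPDF 1) from rfl,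
    lintegral_withDensity_eq_lintegral_mul MeasureTheory.volume measurable_expPDF
      hm.ennreal_ofReal]
  have h2 : (fun x => (exponentialPDF 1 * fun x => ENNReal.ofReal (rexp (t * x))) x)
      = fun x => ENNReal.ofReal (Set.indicator (Ici (0:ℝ)) (fun y => rexp (-(1 - t) * y)) x) := by
    funext x
    simp only [Pi.mul_apply]
    rw [← congrFun (exp_indicator_eq (t := t)) x]
    rcases le_or_gt 0 x with hx | hx
    · rw [exponentialPDF_eq, if_pos hx, ENNReal.toReal_ofReal (by positivity),
        ← ENNReal.ofReal_mul (by positivity)]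
      ring_nf
    · rw [exponentialPDF_eq, if_neg (not_le.mpr hx)]
      simp
  have hint : Integrable (Set.indicator (Ici (0:ℝ)) (fun y => rexp (-(1 - t) * y)))
      MeasureTheory.volume := by
    rw [integrable_indicator_iff measurableSet_Ici]
    exact Iff.mpr integrableOn_Ici_iff_integrableOn_Ioi (exp_neg_integrableOn_Ioi 0 hb)
  rw [h2, ← ofReal_integral_eq_lintegral_ofReal hint
      (ae_of_all _ fun x => Set.indicator_nonneg (fun y _ => (exp_pos _).le) x)]
  rw [integral_indicator measurableSet_Ici, integral_Ici_eq_integral_Ioi]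
  have h3 : ∫ x in Ioi (0:ℝ), rexp (-(1 - t) * x) = (1 - t)⁻¹ := by
    have h4 := integral_comp_mul_left_Ioi (fun y => rexp (-y)) 0 hb
    simp only [mul_zero, integral_exp_neg_Ioi_zero, smul_eq_mul, mul_one] at h4
    rw [← h4]
    congr 1
    funext x; ring_nf
  rw [h3, ENNReal.toReal_ofReal (by positivity)]

lemma mgf_exponential (X : Ω → ℝ) (hX : Measurable X)
    (hd : ∀ x : ℝ, 0 ≤ x → ℙ {ω | x < X ω} = ENNReal.ofReal (Real.exp (-x)))
    {t : ℝ} (ht : t < 1) :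
    Integrable (fun ω => rexp (t * X ω)) ℙ ∧ mgf X ℙ t = (1 - t)⁻¹ := by
  have hmap := map_eq_exp X hX hd
  have hm : Measurable fun x : ℝ => rexp (t * x) := by fun_prop
  have hae : AEStronglyMeasurable (fun x : ℝ => rexp (t * x)) (Measure.map X ℙ) :=
    hm.aestronglyMeasurable
  have hint : Integrable (fun ω => rexp (t * X ω)) ℙ := by
    have h0 : Integrable (fun x => rexp (t * x)) (Measure.map X ℙ) := by
      rw [hmap]; exact integrable_exp_mul_exponential ht
    exact (integrable_map_measure hae hX.aemeasurable).mp h0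
  refine ⟨hint, ?_⟩
  have : mgf X ℙ t = ∫ x, rexp (t * x) ∂(Measure.map X ℙ) :=
    (integral_map hX.aemeasurable hae).symm
  rw [this, hmap, integral_exp_mul_exponential ht]


section chernoff

variable (E : ℕ → Ω → ℝ) (hEmeas : ∀ i, Measurable (E i))
    (hEindep : iIndepFun E ℙ)
    (hEdist : ∀ i, ∀ x : ℝ, 0 ≤ x → ℙ {ω | x < E i ω} = ENNReal.ofReal (Real.exp (-x)))

include hEmeas hEindep hEdist

lemma mgf_sum_exp {t : ℝ} (ht : t < 1) (n : ℕ) :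
    mgf (∑ i ∈ Finset.range n, E i) ℙ t = ((1 - t)⁻¹) ^ n := by
  rw [hEindep.mgf_sum hEmeas (Finset.range n)]
  rw [Finset.prod_congr rfl (fun i _ => (mgf_exponential (E i) (hEmeas i) (hEdist i) ht).2),
    Finset.prod_const, Finset.card_range]

lemma chernoff_le {η : ℝ} (hη0 : 0 < η) (hη1 : η < 1) (n : ℕ) :
    ℙ {ω | (∑ i ∈ Finset.range n, E i) ω ≤ (1 - η) * n}
      ≤ ENNReal.ofReal ((rexp η * (1 - η)) ^ n) := by
  have h1η : (0:ℝ) < 1 - η := by linarith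
  set t : ℝ := -(η / (1 - η)) with htdef
  have ht_le : t ≤ 0 := neg_nonpos.mpr (by positivity)
  have ht1 : t < 1 := lt_of_le_of_lt ht_le one_pos
  have hintS : Integrable (fun ω => rexp (t * (∑ i ∈ Finset.range n, E i) ω)) ℙ :=
    hEindep.integrable_exp_mul_sum hEmeas
      (fun i _ => (mgf_exponential (E i) (hEmeas i) (hEdist i) ht1).1)
  have hch := measure_le_le_exp_mul_mgf (X := ∑ i ∈ Finset.range n, E i) (μ := ℙ)
    ((1 - η) * n) ht_le hintS
  rw [mgf_sum_exp E hEmeas hEindep hEdist ht1 n] at hch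
  have e1 : (1 - t)⁻¹ = 1 - η := by
    rw [htdef]; rw [show (1:ℝ) - -(η / (1 - η)) = (1 - η)⁻¹ by field_simp; ring, inv_inv]
  have e2 : -t * ((1 - η) * n) = η * n := by
    rw [htdef]; field_simp
  rw [e1, e2] at hch
  have e3 : rexp (η * n) * (1 - η) ^ n = (rexp η * (1 - η)) ^ n := by
    rw [mul_comm η (n:ℝ), Real.exp_nat_mul, mul_pow]
  rw [e3] at hch
  calc ℙ {ω | (∑ i ∈ Finset.range n, E i) ω ≤ (1 - η) * n}
      = ENNReal.ofReal ((ℙ {ω | (∑ i ∈ Finset.range n, E i) ω ≤ (1 - η) * n}).toReal) :=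
        (ENNReal.ofReal_toReal (measure_ne_top _ _)).symm
    _ ≤ ENNReal.ofReal ((rexp η * (1 - η)) ^ n) := ENNReal.ofReal_le_ofReal hch

lemma chernoff_ge {η : ℝ} (hη0 : 0 < η) (n : ℕ) :
    ℙ {ω | (1 + η) * n ≤ (∑ i ∈ Finset.range n, E i) ω}
      ≤ ENNReal.ofReal ((rexp (-η) * (1 + η)) ^ n) := by
  have h1η : (0:ℝ) < 1 + η := by linarith
  set t : ℝ := η / (1 + η) with htdef
  have ht_ge : 0 ≤ t := by positivity
  have ht1 : t < 1 := by rw [htdef, div_lt_one h1η]; linarith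
  have hintS : Integrable (fun ω => rexp (t * (∑ i ∈ Finset.range n, E i) ω)) ℙ :=
    hEindep.integrable_exp_mul_sum hEmeas
      (fun i _ => (mgf_exponential (E i) (hEmeas i) (hEdist i) ht1).1)
  have hch := measure_ge_le_exp_mul_mgf (X := ∑ i ∈ Finset.range n, E i) (μ := ℙ)
    ((1 + η) * n) ht_ge hintS
  rw [mgf_sum_exp E hEmeas hEindep hEdist ht1 n] at hch
  have e1 : (1 - t)⁻¹ = 1 + η := by
    rw [htdef]; rw [show (1:ℝ) - η / (1 + η) = (1 + η)⁻¹ by field_simp; ring, inv_inv]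
  have e2 : -t * ((1 + η) * n) = -η * n := by
    rw [htdef]; field_simp
  rw [e1, e2] at hch
  have e3 : rexp (-η * n) * (1 + η) ^ n = (rexp (-η) * (1 + η)) ^ n := by
    rw [mul_comm (-η) (n:ℝ), Real.exp_nat_mul, mul_pow]
  rw [e3] at hch
  calc ℙ {ω | (1 + η) * n ≤ (∑ i ∈ Finset.range n, E i) ω}
      = ENNReal.ofReal ((ℙ {ω | (1 + η) * n ≤ (∑ i ∈ Finset.range n, E i) ω}).toReal) :=
        (ENNReal.ofReal_toReal (measure_ne_top _ _)).symm
    _ ≤ ENNReal.ofReal ((rexp (-η) * (1 + η)) ^ n) := ENNReal.ofReal_le_ofReal hch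


end chernoff

lemma r1_lt_one {η : ℝ} (hη0 : 0 < η) (hη1 : η < 1) : rexp η * (1 - η) < 1 := by
  have h := Real.add_one_lt_exp (x := -η) (by linarith)
  have he : rexp η * rexp (-η) = 1 := by rw [← Real.exp_add]; simp
  nlinarith [Real.exp_pos η]

lemma r2_lt_one {η : ℝ} (hη0 : 0 < η) : rexp (-η) * (1 + η) < 1 := by
  have h := Real.add_one_lt_exp (x := η) (by linarith)
  have he : rexp η * rexp (-η) = 1 := by rw [← Real.exp_add]; simp
  nlinarith [Real.exp_pos (-η)]

/-- MVT step: `x^(1-s) - (x+1)^(1-s) ≤ (s-1) * x^(-s)` for `x ≥ 1`. -/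
lemma rpow_tele_step {s : ℝ} (hs : 1 < s) {x : ℝ} (hx : 1 ≤ x) :
    x ^ (1 - s) - (x + 1) ^ (1 - s) ≤ (s - 1) * x ^ (-s) := by
  have hx0 : (0:ℝ) < x := by linarith
  have hcont : ContinuousOn (fun y : ℝ => y ^ (1 - s)) (Icc x (x + 1)) := by
    intro y hy
    have hy0 : y ≠ 0 := by have := hy.1; intro h; rw [h] at this; linarith
    exact ((Real.hasDerivAt_rpow_const (p := 1 - s) (Or.inl hy0)).continuousAt).continuousWithinAt
  have hderiv : ∀ y ∈ Ioo x (x + 1),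
      HasDerivAt (fun y : ℝ => y ^ (1 - s)) ((1 - s) * y ^ (1 - s - 1)) y := by
    intro y hy
    exact Real.hasDerivAt_rpow_const (Or.inl (by nlinarith [hy.1] : y ≠ 0))
  obtain ⟨c, hc, hceq⟩ := exists_hasDerivAt_eq_slope (fun y : ℝ => y ^ (1 - s))
    (fun y => (1 - s) * y ^ (1 - s - 1)) (by linarith : x < x + 1) hcont hderiv
  have hc0 : 0 < c := by nlinarith [hc.1]
  have hslope : (1 - s) * c ^ (1 - s - 1) = (x + 1) ^ (1 - s) - x ^ (1 - s) := by
    rw [hceq]; simp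
  have hpow : c ^ (1 - s - 1) = c ^ (-s) := by norm_num
  have hle : c ^ (-s) ≤ x ^ (-s) :=
    Real.rpow_le_rpow_of_nonpos hx0 hc.1.le (by linarith)
  nlinarith [Real.rpow_nonneg hc0.le (-s)]

/-- Bernoulli: `x + 1 - s ≤ x^s * (x+1)^(1-s)` for `x ≥ 1`, `s ≥ 1`. -/
lemma bernoulli_rpow {s : ℝ} (hs : 1 < s) {x : ℝ} (hx : 1 ≤ x) :
    x + 1 - s ≤ x ^ s * (x + 1) ^ (1 - s) := by
  have hx0 : (0:ℝ) < x := by linarith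
  have hx1 : (0:ℝ) < x + 1 := by linarith
  have key : 1 + s * (-(1 / (x + 1))) ≤ (1 + (-(1 / (x + 1)))) ^ s :=
    one_add_mul_self_le_rpow_one_add (by
      have h1 : 1 / (x + 1) ≤ 1 := by rw [div_le_one hx1]; linarith
      linarith) hs.le
  have hfrac : 1 + (-(1 / (x + 1))) = x / (x + 1) := by field_simp; ring
  rw [hfrac] at key
  have hdiv : (x / (x + 1)) ^ s = x ^ s * ((x + 1) ^ s)⁻¹ := by
    rw [Real.div_rpow hx0.le hx1.le, div_eq_mul_inv]
  have hsplit : (x + 1) ^ (1 - s) = (x + 1) * ((x + 1) ^ s)⁻¹ := by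
    rw [show (1:ℝ) - s = 1 + (-s) by ring, Real.rpow_add hx1, Real.rpow_one,
      Real.rpow_neg hx1.le]
  rw [hsplit, show x ^ s * ((x + 1) * ((x + 1) ^ s)⁻¹) = (x + 1) * (x ^ s * ((x + 1) ^ s)⁻¹) by
    ring, ← hdiv]
  have h2 : (x + 1) * (1 + s * (-(1 / (x + 1)))) ≤ (x + 1) * (x / (x + 1)) ^ s := by
    exact mul_le_mul_of_nonneg_left key hx1.le
  calc x + 1 - s = (x + 1) * (1 + s * (-(1 / (x + 1)))) := by field_simp; ring
    _ ≤ (x + 1) * (x / (x + 1)) ^ s := h2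

/-- Telescoping sum of the `G`-differences. -/
lemma hasSum_G {s : ℝ} (hs : 1 < s) (m : ℕ) :
    HasSum (fun j : ℕ => ((m + 1 + j : ℕ) : ℝ) ^ (1 - s) / (s - 1)
        - ((m + 1 + j + 1 : ℕ) : ℝ) ^ (1 - s) / (s - 1))
      (((m + 1 : ℕ) : ℝ) ^ (1 - s) / (s - 1)) := by
  have hs1 : (0:ℝ) < s - 1 := by linarith
  have hnn : ∀ j : ℕ, 0 ≤ ((m + 1 + j : ℕ) : ℝ) ^ (1 - s) / (s - 1)
      - ((m + 1 + j + 1 : ℕ) : ℝ) ^ (1 - s) / (s - 1) := by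
    intro j
    have h1 : (0:ℝ) < ((m + 1 + j : ℕ) : ℝ) := by positivity
    have h2 : ((m + 1 + j : ℕ) : ℝ) ≤ ((m + 1 + j + 1 : ℕ) : ℝ) := by push_cast; linarith
    have h3 := Real.rpow_le_rpow_of_nonpos h1 h2 (by linarith : 1 - s ≤ 0)
    have := div_le_div_of_nonneg_right h3 hs1.le
    linarith
  refine (hasSum_iff_tendsto_nat_of_nonneg hnn _).mpr ?_
  have hsum : (fun n : ℕ => ∑ j ∈ Finset.range n, (((m + 1 + j : ℕ) : ℝ) ^ (1 - s) / (s - 1)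
        - ((m + 1 + j + 1 : ℕ) : ℝ) ^ (1 - s) / (s - 1)))
      = fun n : ℕ => ((m + 1 : ℕ) : ℝ) ^ (1 - s) / (s - 1)
        - ((m + 1 + n : ℕ) : ℝ) ^ (1 - s) / (s - 1) := by
    funext n
    exact Finset.sum_range_sub' (fun j => ((m + 1 + j : ℕ) : ℝ) ^ (1 - s) / (s - 1)) n
  rw [hsum]
  have hcomp : Tendsto (fun n : ℕ => ((m + 1 + n : ℕ) : ℝ)) atTop atTop :=
    tendsto_natCast_atTop_atTop.comp
      (tendsto_atTop_mono (fun n => Nat.le_add_left n (m + 1)) tendsto_id)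
  have h2 : Tendsto (fun x : ℝ => x ^ (1 - s) / (s - 1)) atTop (𝓝 0) := by
    have h0 := (tendsto_rpow_neg_atTop hs1).div_const (s - 1)
    rw [zero_div] at h0
    simpa only [show -(s - 1) = 1 - s by ring] using h0
  have htend : Tendsto (fun n : ℕ => ((m + 1 + n : ℕ) : ℝ) ^ (1 - s) / (s - 1))
      atTop (𝓝 0) := h2.comp hcomp
  simpa using tendsto_const_nhds.sub htend


lemma det_bound {s η : ℝ} (hs : 1 < s) (hη0 : 0 < η) (hη1 : η < 1)
    (m : ℕ) (T : ℕ → ℝ)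
    (hT : ∀ j, m ≤ j → (1 - η) * j ≤ T j ∧ T j ≤ (1 + η) * j)
    {θ : ℝ} (hθ : 0 < θ) (hms : s ≤ (m : ℝ))
    (hcond : (s - 1) * ((1 + η) / (1 - η)) ^ s ≤ θ * ((m : ℝ) + 1 - s)) :
    ((T m) ^ s)⁻¹ ≤ θ * ∑' j : ℕ, ((T (m + 1 + j)) ^ s)⁻¹ := by
  have h1η : (0:ℝ) < 1 - η := by linarith
  have h2η : (0:ℝ) < 1 + η := by linarith
  have hm1 : (1:ℝ) ≤ (m:ℝ) := le_trans hs.le hms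
  have hm0 : 0 < m := by exact_mod_cast lt_of_lt_of_le one_pos hm1
  -- positivity of T at relevant indices
  have hTpos : ∀ j, m ≤ j → 0 < T j := by
    intro j hj
    have h := (hT j hj).1
    have : (0:ℝ) < (1 - η) * j := by
      have : (1:ℝ) ≤ (j:ℝ) := by
        have : (m:ℝ) ≤ (j:ℝ) := by exact_mod_cast hj
        linarith
      positivity
    linarith
  -- abbreviations
  set A : ℝ := (m:ℝ) ^ s with hA
  set P : ℝ := (1 + η) ^ s with hP
  set Q : ℝ := (1 - η) ^ s with hQ
  have hApos : 0 < A := Real.rpow_pos_of_pos (by positivity) s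
  have hPpos : 0 < P := Real.rpow_pos_of_pos h2η s
  have hQpos : 0 < Q := Real.rpow_pos_of_pos h1η s
  have hs1 : (0:ℝ) < s - 1 := by linarith
  -- Step 2 : (T m ^ s)⁻¹ ≤ (Q * A)⁻¹
  have hstep2 : ((T m) ^ s)⁻¹ ≤ (Q * A)⁻¹ := by
    have h2 : (1 - η) * m ≤ T m := (hT m le_rfl).1
    have h3 : ((1 - η) * m) ^ s ≤ (T m) ^ s :=
      Real.rpow_le_rpow (by positivity) h2 (by linarith)
    have h4 : ((1 - η) * m) ^ s = Q * A := Real.mul_rpow h1η.le (by positivity)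
    rw [← h4]
    exact inv_anti₀ (Real.rpow_pos_of_pos (by positivity) s) h3
  -- lower bound sequence
  set L : ℕ → ℝ := fun j => P⁻¹ * (((m + 1 + j : ℕ) : ℝ) ^ (1 - s) / (s - 1)
      - ((m + 1 + j + 1 : ℕ) : ℝ) ^ (1 - s) / (s - 1)) with hL
  have hLsum : HasSum L (P⁻¹ * (((m + 1 : ℕ) : ℝ) ^ (1 - s) / (s - 1))) :=
    (hasSum_G hs m).mul_left P⁻¹
  -- per-term comparison
  have hterm : ∀ j : ℕ, L j ≤ ((T (m + 1 + j)) ^ s)⁻¹ := by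
    intro j
    have hx1 : (1:ℝ) ≤ ((m + 1 + j : ℕ) : ℝ) := by
      push_cast; linarith [Nat.cast_nonneg (α := ℝ) j]
    have hx0 : (0:ℝ) < ((m + 1 + j : ℕ) : ℝ) := by linarith
    have hcast : ((m + 1 + j + 1 : ℕ) : ℝ) = ((m + 1 + j : ℕ) : ℝ) + 1 := by push_cast; ring
    have htele : ((m + 1 + j : ℕ) : ℝ) ^ (1 - s) / (s - 1)
        - ((m + 1 + j + 1 : ℕ) : ℝ) ^ (1 - s) / (s - 1) ≤ ((m + 1 + j : ℕ) : ℝ) ^ (-s) := by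
      have := rpow_tele_step hs hx1
      rw [hcast]
      rw [div_sub_div_same]
      rw [div_le_iff₀ hs1]
      linarith
    have hmono : L j ≤ P⁻¹ * ((m + 1 + j : ℕ) : ℝ) ^ (-s) := by
      rw [hL]
      exact mul_le_mul_of_nonneg_left htele (by positivity)
    refine hmono.trans ?_
    -- P⁻¹ * n^(-s) = ((1+η)*n)^s)⁻¹ ≤ (T n ^ s)⁻¹
    have hje : m ≤ m + 1 + j := by omega
    have hTub : T (m + 1 + j) ≤ (1 + η) * ((m + 1 + j : ℕ) : ℝ) := (hT _ hje).2
    have hTpos' : 0 < T (m + 1 + j) := hTpos _ hje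
    have h5 : (T (m + 1 + j)) ^ s ≤ ((1 + η) * ((m + 1 + j : ℕ) : ℝ)) ^ s :=
      Real.rpow_le_rpow hTpos'.le hTub (by linarith)
    have h6 : (((1 + η) * ((m + 1 + j : ℕ) : ℝ)) ^ s)⁻¹ ≤ ((T (m + 1 + j)) ^ s)⁻¹ :=
      inv_anti₀ (Real.rpow_pos_of_pos hTpos' s) h5
    refine le_trans (le_of_eq ?_) h6
    rw [Real.mul_rpow h2η.le hx0.le, mul_inv, Real.rpow_neg hx0.le]
  -- summability of the main series
  have hasum : Summable (fun j : ℕ => ((T (m + 1 + j)) ^ s)⁻¹) := by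
    have hsum0 : Summable (fun n : ℕ => ((n:ℝ)) ^ (-s)) :=
      Real.summable_nat_rpow.mpr (by linarith)
    have hsum1 : Summable (fun j : ℕ => ((m + 1 + j : ℕ) : ℝ) ^ (-s)) :=
      hsum0.comp_injective (add_right_injective (m + 1))
    refine Summable.of_nonneg_of_le (fun j => ?_) (fun j => ?_) (hsum1.mul_left Q⁻¹)
    · have := hTpos _ (by omega : m ≤ m + 1 + j)
      positivity
    · have hje : m ≤ m + 1 + j := by omega
      have hx0 : (0:ℝ) < ((m + 1 + j : ℕ) : ℝ) := by positivity
      have hTlb : (1 - η) * ((m + 1 + j : ℕ) : ℝ) ≤ T (m + 1 + j) := (hT _ hje).1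
      have h5 : ((1 - η) * ((m + 1 + j : ℕ) : ℝ)) ^ s ≤ (T (m + 1 + j)) ^ s :=
        Real.rpow_le_rpow (by positivity) hTlb (by linarith)
      have h6 : ((T (m + 1 + j)) ^ s)⁻¹ ≤ (((1 - η) * ((m + 1 + j : ℕ) : ℝ)) ^ s)⁻¹ :=
        inv_anti₀ (Real.rpow_pos_of_pos (by positivity) s) h5
      refine h6.trans (le_of_eq ?_)
      rw [Real.mul_rpow h1η.le hx0.le, mul_inv, Real.rpow_neg hx0.le]
  -- tsum comparison
  have htsum : P⁻¹ * (((m + 1 : ℕ) : ℝ) ^ (1 - s) / (s - 1))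
      ≤ ∑' j : ℕ, ((T (m + 1 + j)) ^ s)⁻¹ := by
    rw [← hLsum.tsum_eq]
    exact Summable.tsum_le_tsum hterm hLsum.summable hasum
  -- final numeric comparison
  have hB1pos : (0:ℝ) < ((m:ℝ) + 1) ^ (1 - s) := Real.rpow_pos_of_pos (by linarith) (1 - s)
  have hkey : (s - 1) * P ≤ θ * (Q * ((m:ℝ) ^ s * ((m:ℝ) + 1) ^ (1 - s))) := by
    have hPQ : ((1 + η) / (1 - η)) ^ s = P / Q := by
      rw [hP, hQ]; exact Real.div_rpow h2η.le h1η.le s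
    rw [hPQ] at hcond
    have hb := bernoulli_rpow hs hm1
    have h7 : (s - 1) * (P / Q) * Q ≤ θ * ((m:ℝ) + 1 - s) * Q :=
      mul_le_mul_of_nonneg_right hcond hQpos.le
    have h8 : (s - 1) * (P / Q) * Q = (s - 1) * P := by field_simp
    have h9 : θ * ((m:ℝ) + 1 - s) ≤ θ * ((m:ℝ) ^ s * ((m:ℝ) + 1) ^ (1 - s)) :=
      mul_le_mul_of_nonneg_left hb hθ.le
    nlinarith
  have hnum : (Q * A)⁻¹ ≤ θ * (P⁻¹ * (((m + 1 : ℕ) : ℝ) ^ (1 - s) / (s - 1))) := by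
    have hcast2 : ((m + 1 : ℕ) : ℝ) = (m:ℝ) + 1 := by push_cast; ring
    rw [hcast2]
    rw [show θ * (P⁻¹ * (((m:ℝ) + 1) ^ (1 - s) / (s - 1)))
        = (θ * ((m:ℝ) + 1) ^ (1 - s)) / (P * (s - 1)) by field_simp]
    rw [show (Q * A)⁻¹ = 1 / (Q * A) by rw [one_div]]
    rw [div_le_div_iff₀ (by positivity) (by positivity)]
    rw [hA] at *
    nlinarith
  calc ((T m) ^ s)⁻¹ ≤ (Q * A)⁻¹ := hstep2
    _ ≤ θ * (P⁻¹ * (((m + 1 : ℕ) : ℝ) ^ (1 - s) / (s - 1))) := hnum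
    _ ≤ θ * ∑' j : ℕ, ((T (m + 1 + j)) ^ s)⁻¹ := mul_le_mul_of_nonneg_left htsum hθ.le


/-- probability that the concentration event fails from index `m` on -/
lemma bad_bound (E : ℕ → Ω → ℝ) (hEmeas : ∀ i, Measurable (E i))
    (hEindep : iIndepFun E ℙ)
    (hEdist : ∀ i, ∀ x : ℝ, 0 ≤ x → ℙ {ω | x < E i ω} = ENNReal.ofReal (Real.exp (-x)))
    {η : ℝ} (hη0 : 0 < η) (hη1 : η < 1) (m : ℕ) :
    ℙ ({ω | ∀ j, m ≤ j → (1 - η) * j ≤ (∑ i ∈ Finset.range j, E i ω)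
          ∧ (∑ i ∈ Finset.range j, E i ω) ≤ (1 + η) * j}ᶜ)
      ≤ ENNReal.ofReal (2 * (max (rexp η * (1 - η)) (rexp (-η) * (1 + η))) ^ m
          / (1 - max (rexp η * (1 - η)) (rexp (-η) * (1 + η)))) := by
  set r1 : ℝ := rexp η * (1 - η) with hr1def
  set r2 : ℝ := rexp (-η) * (1 + η) with hr2def
  set r : ℝ := max r1 r2 with hrdef
  have hr1nn : 0 ≤ r1 := mul_nonneg (exp_pos _).le (by linarith)
  have hr2nn : 0 ≤ r2 := mul_nonneg (exp_pos _).le (by linarith)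
  have hr0 : 0 ≤ r := le_trans hr1nn (le_max_left _ _)
  have hrlt : r < 1 := max_lt (r1_lt_one hη0 hη1) (r2_lt_one hη0)
  -- union bound
  have hsub : {ω : Ω | ∀ j, m ≤ j → (1 - η) * j ≤ (∑ i ∈ Finset.range j, E i ω)
        ∧ (∑ i ∈ Finset.range j, E i ω) ≤ (1 + η) * j}ᶜ
      ⊆ ⋃ j : ℕ, ({ω : Ω | (∑ i ∈ Finset.range (m + j), E i ω) ≤ (1 - η) * ((m + j : ℕ) : ℝ)}
          ∪ {ω : Ω | (1 + η) * ((m + j : ℕ) : ℝ) ≤ (∑ i ∈ Finset.range (m + j), E i ω)}) := by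
    intro ω hω
    simp only [mem_compl_iff, mem_setOf_eq, not_forall] at hω
    obtain ⟨j, hj, hno⟩ := hω
    rw [not_and_or] at hno
    refine mem_iUnion.mpr ⟨j - m, ?_⟩
    have hjm : m + (j - m) = j := by omega
    rw [hjm]
    rcases hno with h | h
    · exact Or.inl (le_of_lt (not_le.mp h))
    · exact Or.inr (le_of_lt (not_le.mp h))
  refine le_trans (measure_mono hsub) (le_trans (measure_iUnion_le _) ?_)
  have hterm : ∀ j : ℕ,
      ℙ ({ω : Ω | (∑ i ∈ Finset.range (m + j), E i ω) ≤ (1 - η) * ((m + j : ℕ) : ℝ)}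
        ∪ {ω : Ω | (1 + η) * ((m + j : ℕ) : ℝ) ≤ (∑ i ∈ Finset.range (m + j), E i ω)})
      ≤ ENNReal.ofReal (2 * r ^ m * r ^ j) := by
    intro j
    refine le_trans (measure_union_le _ _) ?_
    have h1 : ℙ {ω : Ω | (∑ i ∈ Finset.range (m + j), E i ω) ≤ (1 - η) * ((m + j : ℕ) : ℝ)}
        ≤ ENNReal.ofReal (r1 ^ (m + j)) := by
      have hset : {ω : Ω | (∑ i ∈ Finset.range (m + j), E i ω) ≤ (1 - η) * ((m + j : ℕ) : ℝ)}
          = {ω : Ω | (∑ i ∈ Finset.range (m + j), E i) ω ≤ (1 - η) * ((m + j : ℕ) : ℝ)} := by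
        simp only [Finset.sum_apply]
      rw [hset]
      exact_mod_cast chernoff_le E hEmeas hEindep hEdist hη0 hη1 (m + j)
    have h2 : ℙ {ω : Ω | (1 + η) * ((m + j : ℕ) : ℝ) ≤ (∑ i ∈ Finset.range (m + j), E i ω)}
        ≤ ENNReal.ofReal (r2 ^ (m + j)) := by
      have hset : {ω : Ω | (1 + η) * ((m + j : ℕ) : ℝ) ≤ (∑ i ∈ Finset.range (m + j), E i ω)}
          = {ω : Ω | (1 + η) * ((m + j : ℕ) : ℝ) ≤ (∑ i ∈ Finset.range (m + j), E i) ω} := by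
        simp only [Finset.sum_apply]
      rw [hset]
      exact_mod_cast chernoff_ge E hEmeas hEindep hEdist hη0 (m + j)
    refine le_trans (add_le_add h1 h2) ?_
    rw [← ENNReal.ofReal_add (by positivity) (by positivity)]
    apply ENNReal.ofReal_le_ofReal
    have e1 : r1 ^ (m + j) ≤ r ^ (m + j) := pow_le_pow_left₀ hr1nn (le_max_left _ _) _
    have e2 : r2 ^ (m + j) ≤ r ^ (m + j) := pow_le_pow_left₀ hr2nn (le_max_right _ _) _
    have e3 : r ^ (m + j) = r ^ m * r ^ j := pow_add r m j
    nlinarith [pow_nonneg hr0 (m + j)]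
  refine le_trans (ENNReal.tsum_le_tsum hterm) ?_
  have hsummable : Summable (fun j : ℕ => 2 * r ^ m * r ^ j) :=
    (summable_geometric_of_lt_one hr0 hrlt).mul_left _
  rw [← ENNReal.ofReal_tsum_of_nonneg (fun j => by positivity) hsummable]
  apply ENNReal.ofReal_le_ofReal
  rw [tsum_mul_left, tsum_geometric_of_lt_one hr0 hrlt]
  rw [div_eq_mul_inv]


end SICaux

open SICaux

/-- the aggregate throughput `R(θ) = log(1+θ)·Σ_{k≥1} p_k(θ)` satisfies
`limsup_{θ→0⁺} R(θ) ≤ 1/β − 1`. -/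
theorem sic_aggregate_throughput_limsup
    {Ω : Type*} [MeasureSpace Ω] [IsProbabilityMeasure (ℙ : Measure Ω)]
    (β : ℝ) (hβ : β ∈ Set.Ioo (0:ℝ) 1)
    (E : ℕ → Ω → ℝ) (hEmeas : ∀ i, Measurable (E i))
    (hEindep : iIndepFun E ℙ)
    (hEdist : ∀ i, ∀ x : ℝ, 0 ≤ x → ℙ {ω | x < E i ω} = ENNReal.ofReal (Real.exp (-x)))
    (ξ : ℕ → Ω → ℝ)
    (hξ : ∀ k ω, ξ k ω = (∑ i ∈ Finset.range k, E i ω) ^ (1/β : ℝ))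
    (I : ℕ → Ω → ℝ) (hI : ∀ k ω, I k ω = ∑' j : ℕ, (ξ (k + 1 + j) ω)⁻¹)
    -- the aggregate throughput, as a function of the SIR threshold θ, valued in [0,∞]
    (R : ℝ → ENNReal)
    (hR : ∀ θ : ℝ, R θ = ENNReal.ofReal (Real.log (1 + θ))
        * ∑' k : ℕ, ℙ {ω | ∀ i, 1 ≤ i → i ≤ k + 1 → θ * I i ω < (ξ i ω)⁻¹}) :
    Filter.limsup R (nhdsWithin 0 (Set.Ioi 0)) ≤ ENNReal.ofReal (1 / β - 1) := by
  obtain ⟨hβ0, hβ1⟩ := hβ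
  have hs : 1 < 1/β := (one_lt_div hβ0).mpr hβ1
  set s : ℝ := 1/β with hsdef
  have hs0 : 0 < s := lt_trans one_pos hs
  suffices H : ∀ c' : ℝ, s - 1 < c' → ∀ᶠ θ in nhdsWithin 0 (Set.Ioi 0),
      R θ ≤ ENNReal.ofReal c' by
    refine ENNReal.le_of_forall_pos_le_add fun ε hε _ => ?_
    have hεR : (0:ℝ) < (ε:ℝ) := by exact_mod_cast hε
    have hc' : s - 1 < s - 1 + (ε:ℝ) := lt_add_of_pos_right _ hεR
    have h2 : Filter.limsup R (nhdsWithin 0 (Set.Ioi 0)) ≤ ENNReal.ofReal (s - 1 + (ε:ℝ)) :=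
      limsup_le_of_le (by isBoundedDefault) (H _ hc')
    rw [ENNReal.ofReal_add (by linarith) hεR.le, ENNReal.ofReal_coe_nnreal] at h2
    exact h2
  intro c' hc'
  set c : ℝ := ((s - 1) + c')/2 with hcdef
  have hc1 : s - 1 < c := by rw [hcdef]; linarith
  have hc2 : c < c' := by rw [hcdef]; linarith
  have hc0 : 0 < c := by have : 0 < s - 1 := by linarith
                         linarith
  -- choice of η
  set K : ℝ := c/(s-1) with hKdef
  have hK1 : 1 < K := (one_lt_div (by linarith)).mpr hc1
  have hK0 : 0 < K := lt_trans one_pos hK1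
  set u : ℝ := K ^ (s⁻¹) with hudef
  have hu1 : 1 < u := by
    rw [hudef, Real.one_lt_rpow_iff hK0.le]
    exact Or.inl ⟨hK1, by positivity⟩
  set η : ℝ := min (1/2) ((u - 1)/(u + 1)) with hηdef
  have hη0 : 0 < η := lt_min (by norm_num) (div_pos (by linarith) (by linarith))
  have hη1 : η < 1 := lt_of_le_of_lt (min_le_left _ _) (by norm_num)
  have h1η : 0 < 1 - η := by linarith
  have hfrac : (1 + η)/(1 - η) ≤ u := by
    rw [div_le_iff₀ h1η]
    have h3 : η ≤ (u - 1)/(u + 1) := min_le_right _ _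
    rw [le_div_iff₀ (by linarith : (0:ℝ) < u + 1)] at h3
    nlinarith
  have hDle : (s - 1) * ((1 + η)/(1 - η)) ^ s ≤ c := by
    have h4 : ((1 + η)/(1 - η)) ^ s ≤ u ^ s :=
      Real.rpow_le_rpow (by positivity) hfrac (by linarith)
    have h5 : u ^ s = K := by
      rw [hudef, ← Real.rpow_mul hK0.le, inv_mul_cancel₀ (by linarith : s ≠ 0), Real.rpow_one]
    have h6 : (s - 1) * ((1 + η)/(1 - η)) ^ s ≤ (s - 1) * K :=
      mul_le_mul_of_nonneg_left (h4.trans h5.le) (by linarith)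
    refine h6.trans (le_of_eq ?_)
    rw [hKdef, mul_div_cancel₀ _ (by linarith : s - 1 ≠ 0)]
  -- constants
  set r : ℝ := max (rexp η * (1 - η)) (rexp (-η) * (1 + η)) with hrdef
  have hr0 : 0 ≤ r := le_trans (mul_nonneg (exp_pos _).le (by linarith)) (le_max_left _ _)
  have hr1 : r < 1 := max_lt (r1_lt_one hη0 hη1) (r2_lt_one hη0)
  have h1r : 0 < 1 - r := by linarith
  set K' : ℝ := 2 / ((1 - r) * (1 - r)) with hK'def
  have hK'0 : 0 ≤ K' := by positivity
  set δ : ℝ := (c' - c) / (s + 1 + K') with hδdef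
  have hsK : 0 < s + 1 + K' := by linarith
  have hδ0 : 0 < δ := div_pos (by linarith) hsK
  filter_upwards [Ioc_mem_nhdsGT hδ0] with θ hθ
  obtain ⟨hθ0, hθδ⟩ := hθ
  set M : ℕ := ⌈s + c/θ⌉₊ with hMdef
  have hMge : s + c/θ ≤ (M:ℝ) := Nat.le_ceil _
  have hMlt : (M:ℝ) < s + c/θ + 1 := Nat.ceil_lt_add_one (by positivity)
  -- per-k bound
  have hkey : ∀ k : ℕ, ℙ {ω | ∀ i, 1 ≤ i → i ≤ k + 1 → θ * I i ω < (ξ i ω)⁻¹}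
      ≤ (if k + 1 < M then (1:ℝ≥0∞) else 0) + ENNReal.ofReal (2 * r ^ (k+1) / (1 - r)) := by
    intro k
    by_cases hk : k + 1 < M
    · rw [if_pos hk]
      exact le_trans prob_le_one le_self_add
    · rw [if_neg hk, zero_add]
      have hmM : M ≤ k + 1 := not_lt.mp hk
      have hsub1 : {ω : Ω | ∀ i, 1 ≤ i → i ≤ k + 1 → θ * I i ω < (ξ i ω)⁻¹}
          ⊆ {ω : Ω | ∀ j, (k+1) ≤ j → (1 - η) * j ≤ (∑ i ∈ Finset.range j, E i ω)
              ∧ (∑ i ∈ Finset.range j, E i ω) ≤ (1 + η) * j}ᶜ := by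
        intro ω hω
        simp only [mem_setOf_eq] at hω
        have hA : θ * I (k+1) ω < (ξ (k+1) ω)⁻¹ := hω (k+1) (by omega) le_rfl
        simp only [mem_compl_iff, mem_setOf_eq]
        intro hGood
        have hMm : (M:ℝ) ≤ ((k+1 : ℕ):ℝ) := by exact_mod_cast hmM
        have hcθ : 0 < c/θ := by positivity
        have hms : s ≤ ((k+1 : ℕ):ℝ) := by linarith
        have hcond : (s - 1) * ((1 + η) / (1 - η)) ^ s ≤ θ * (((k+1 : ℕ):ℝ) + 1 - s) := by
          have h7 : c/θ ≤ ((k+1 : ℕ):ℝ) + 1 - s := by linarith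
          have h8 : θ * (c/θ) = c := by field_simp
          calc (s - 1) * ((1 + η) / (1 - η)) ^ s ≤ c := hDle
            _ = θ * (c/θ) := h8.symm
            _ ≤ θ * (((k+1 : ℕ):ℝ) + 1 - s) := mul_le_mul_of_nonneg_left h7 hθ0.le
        have hdet := det_bound hs hη0 hη1 (k+1) (fun j => ∑ i ∈ Finset.range j, E i ω)
            hGood hθ0 hms hcond
        have hIrw : I (k+1) ω = ∑' j : ℕ, ((∑ i ∈ Finset.range ((k+1) + 1 + j), E i ω) ^ s)⁻¹ := by
          rw [hI ((k+1)) ω]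
          exact tsum_congr fun j => by rw [hξ]
        have hξrw : (ξ (k+1) ω)⁻¹ = ((∑ i ∈ Finset.range (k+1), E i ω) ^ s)⁻¹ := by
          rw [hξ]
        rw [hIrw, hξrw] at hA
        exact absurd hdet (not_le.mpr hA)
      refine le_trans (measure_mono hsub1) ?_
      refine le_trans (bad_bound E hEmeas hEindep hEdist hη0 hη1 (k+1)) ?_
      exact le_rfl
  -- summing up
  have hsum1 : ∑' k : ℕ, (if k + 1 < M then (1:ℝ≥0∞) else 0) ≤ (M : ℝ≥0∞) := by
    refine le_trans (le_of_eq (tsum_eq_sum (s := Finset.range M)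
      (fun k hk => if_neg (by rw [Finset.mem_range] at hk; omega)))) ?_
    calc ∑ k ∈ Finset.range M, (if k + 1 < M then (1:ℝ≥0∞) else 0)
        ≤ ∑ _k ∈ Finset.range M, (1:ℝ≥0∞) := Finset.sum_le_sum (fun k _ => by
          split <;> simp)
      _ = M := by simp
  have hsum2 : ∑' k : ℕ, ENNReal.ofReal (2 * r ^ (k+1) / (1 - r)) ≤ ENNReal.ofReal K' := by
    have hterm2 : ∀ k : ℕ, ENNReal.ofReal (2 * r ^ (k+1) / (1 - r))
        ≤ ENNReal.ofReal ((2/(1-r)) * r ^ k) := by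
      intro k
      apply ENNReal.ofReal_le_ofReal
      have hpow : r ^ (k+1) ≤ r ^ k := pow_le_pow_of_le_one hr0 hr1.le (by omega)
      rw [show 2 * r ^ (k+1) / (1 - r) = (2/(1-r)) * r ^ (k+1) by ring]
      exact mul_le_mul_of_nonneg_left hpow (by positivity)
    refine le_trans (ENNReal.tsum_le_tsum hterm2) ?_
    rw [← ENNReal.ofReal_tsum_of_nonneg (fun k => by positivity)
      ((summable_geometric_of_lt_one hr0 hr1).mul_left _)]
    apply ENNReal.ofReal_le_ofReal
    rw [tsum_mul_left, tsum_geometric_of_lt_one hr0 hr1, hK'def]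
    refine le_of_eq ?_
    field_simp
  rw [hR θ]
  have hlog : Real.log (1 + θ) ≤ θ := by
    have := Real.log_le_sub_one_of_pos (by linarith : (0:ℝ) < 1 + θ)
    linarith
  have htsum_le : ∑' k : ℕ, ℙ {ω | ∀ i, 1 ≤ i → i ≤ k + 1 → θ * I i ω < (ξ i ω)⁻¹}
      ≤ (M : ℝ≥0∞) + ENNReal.ofReal K' := by
    refine le_trans (ENNReal.tsum_le_tsum hkey) ?_
    rw [ENNReal.tsum_add]
    exact add_le_add hsum1 hsum2
  calc ENNReal.ofReal (Real.log (1 + θ))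
        * ∑' k : ℕ, ℙ {ω | ∀ i, 1 ≤ i → i ≤ k + 1 → θ * I i ω < (ξ i ω)⁻¹}
      ≤ ENNReal.ofReal θ * ((M : ℝ≥0∞) + ENNReal.ofReal K') :=
        mul_le_mul' (ENNReal.ofReal_le_ofReal hlog) htsum_le
    _ = ENNReal.ofReal (θ * ((M:ℝ) + K')) := by
        rw [← ENNReal.ofReal_natCast M, ← ENNReal.ofReal_add (by positivity) hK'0,
          ← ENNReal.ofReal_mul hθ0.le]
    _ ≤ ENNReal.ofReal c' := by
        apply ENNReal.ofReal_le_ofReal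
        have h9 : θ * ((M:ℝ) + K') ≤ θ * (s + c/θ + 1 + K') :=
          mul_le_mul_of_nonneg_left (by linarith) hθ0.le
        have h10 : θ * (s + c/θ + 1 + K') = θ*(s + 1 + K') + c := by
          field_simp; ring
        have h11 : θ * (s + 1 + K') ≤ δ * (s + 1 + K') :=
          mul_le_mul_of_nonneg_right hθδ (by linarith)
        have h12 : δ * (s + 1 + K') = c' - c := by
          rw [hδdef]; field_simp
        linarith
end

section
/- In the noisy network, the aggregate throughput tends to zero as the SIR threshold tends to zero: lim_{θ → 0⁺} log(1+θ) · Σ_{k=1}^∞ p_k^W(θ) = 0. -/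
open MeasureTheory ProbabilityTheory Real Filter

lemma sic_aux_lintegral_prod {Ω : Type*} [MeasureSpace Ω] [IsProbabilityMeasure (ℙ : Measure Ω)]
    (g : ℕ → Ω → ENNReal) (hmeas : ∀ i, Measurable (g i))
    (hind : iIndepFun g ℙ) (n : ℕ) :
    ∫⁻ ω, ∏ i ∈ Finset.range n, g i ω ∂ℙ = ∏ i ∈ Finset.range n, ∫⁻ ω, g i ω ∂ℙ := by
  induction n with
  | zero => simp
  | succ n ih =>
    have hprod : Measurable (fun ω => ∏ i ∈ Finset.range n, g i ω) :=
      Finset.measurable_prod _ (fun i _ => hmeas i)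
    have hindep := hind.indepFun_prod_range_succ hmeas n
    have key := lintegral_mul_eq_lintegral_mul_lintegral_of_indepFun''
      (μ := ℙ) (f := fun ω => ∏ i ∈ Finset.range n, g i ω) (g := g n)
      hprod.aemeasurable (hmeas n).aemeasurable ?_
    · simp only [Finset.prod_range_succ]
      rw [key, ih]
    · have : (fun ω => ∏ i ∈ Finset.range n, g i ω) = ∏ i ∈ Finset.range n, g i := by
        funext ω; simp
      rw [this]; exact hindep

/-- in the noisy network, the aggregate throughput
`log(1+θ)·Σ_{k≥1} p_k^W(θ)` tends to `0` as `θ → 0⁺`. -/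
theorem sic_noisy_throughput_tendsto_zero
    {Ω : Type*} [MeasureSpace Ω] [IsProbabilityMeasure (ℙ : Measure Ω)]
    (β a W : ℝ) (hβ : β ∈ Set.Ioo (0:ℝ) 1) (ha : 0 < a) (hW : 0 < W)
    (E : ℕ → Ω → ℝ) (hEmeas : ∀ i, Measurable (E i))
    (hEindep : iIndepFun E ℙ)
    (hEdist : ∀ i, ∀ x : ℝ, 0 ≤ x → ℙ {ω | x < E i ω} = ENNReal.ofReal (Real.exp (-x)))
    (ξ : ℕ → Ω → ℝ)
    (hξ : ∀ k ω, ξ k ω = ((∑ i ∈ Finset.range k, E i ω) / a) ^ (1/β : ℝ))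
    (I : ℕ → Ω → ℝ) (hI : ∀ k ω, I k ω = ∑' j : ℕ, (ξ (k + 1 + j) ω)⁻¹)
    (R : ℝ → ENNReal)
    (hR : ∀ θ : ℝ, R θ = ENNReal.ofReal (Real.log (1 + θ))
        * ∑' k : ℕ, ℙ {ω | ∀ i, 1 ≤ i → i ≤ k + 1 → θ * (I i ω + W) < (ξ i ω)⁻¹}) :
    Filter.Tendsto R (nhdsWithin 0 (Set.Ioi 0)) (nhds 0) := by
  obtain ⟨hβ0, hβ1⟩ := hβ
  -- a.e. positivity of the E i
  have hA : ∀ᵐ ω ∂(ℙ : Measure Ω), ∀ i, 0 < E i ω := by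
    rw [ae_all_iff]
    intro i
    have h1 : ℙ {ω | 0 < E i ω} = 1 := by simpa using hEdist i 0 le_rfl
    have hm : MeasurableSet {ω | 0 < E i ω} := measurableSet_lt measurable_const (hEmeas i)
    have h2 := (prob_compl_eq_zero_iff hm).2 h1
    rw [ae_iff]
    exact h2
  -- per-factor moment bound
  have hfact : ∀ s : ℝ, 0 < s → ∀ i : ℕ,
      ∫⁻ ω, ENNReal.ofReal (Real.exp (-(s * E i ω))) ∂ℙ
        ≤ ENNReal.ofReal (1 - Real.exp (-1) * (1 - Real.exp (-s))) := by
    intro s hs i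
    have hm1 : MeasurableSet {ω | 1 < E i ω} := measurableSet_lt measurable_const (hEmeas i)
    have hle : ∀ᵐ ω ∂(ℙ:Measure Ω), ENNReal.ofReal (Real.exp (-(s * E i ω)))
        ≤ ({ω | 1 < E i ω}ᶜ).indicator (fun _ => (1:ENNReal)) ω
          + ({ω | 1 < E i ω}).indicator (fun _ => ENNReal.ofReal (Real.exp (-s))) ω := by
      filter_upwards [hA] with ω hω
      by_cases h : 1 < E i ω
      · simp only [Set.indicator_apply, Set.mem_compl_iff, Set.mem_setOf_eq, h,
          if_true, if_false, not_true, zero_add]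
        exact ENNReal.ofReal_le_ofReal (Real.exp_le_exp.2 (by nlinarith))
      · simp only [Set.indicator_apply, Set.mem_compl_iff, Set.mem_setOf_eq, h,
          if_true, if_false, not_false_iff, add_zero]
        have h1 : Real.exp (-(s * E i ω)) ≤ 1 := by
          rw [Real.exp_le_one_iff]
          nlinarith [hω i]
        calc ENNReal.ofReal (Real.exp (-(s * E i ω))) ≤ ENNReal.ofReal 1 :=
              ENNReal.ofReal_le_ofReal h1
          _ = 1 := ENNReal.ofReal_one
    have hE1 : ℙ {ω | 1 < E i ω} = ENNReal.ofReal (Real.exp (-1)) := hEdist i 1 zero_le_one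
    have hcalc : ∫⁻ ω, (({ω | 1 < E i ω}ᶜ).indicator (fun _ => (1:ENNReal)) ω
          + ({ω | 1 < E i ω}).indicator (fun _ => ENNReal.ofReal (Real.exp (-s))) ω) ∂ℙ
        = ℙ ({ω | 1 < E i ω}ᶜ) + ENNReal.ofReal (Real.exp (-s)) * ℙ {ω | 1 < E i ω} := by
      rw [lintegral_add_left (measurable_const.indicator hm1.compl)]
      rw [lintegral_indicator_const hm1.compl, lintegral_indicator_const hm1, one_mul]
    have hcompl : ℙ ({ω | 1 < E i ω}ᶜ) = 1 - ENNReal.ofReal (Real.exp (-1)) := by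
      rw [measure_compl hm1 (measure_ne_top _ _), hE1, measure_univ]
    calc ∫⁻ ω, ENNReal.ofReal (Real.exp (-(s * E i ω))) ∂ℙ
        ≤ _ := lintegral_mono_ae hle
      _ = 1 - ENNReal.ofReal (Real.exp (-1)) + ENNReal.ofReal (Real.exp (-s)) * ENNReal.ofReal (Real.exp (-1)) := by
          rw [hcalc, hcompl, hE1]
      _ = ENNReal.ofReal (1 - Real.exp (-1)) + ENNReal.ofReal (Real.exp (-s) * Real.exp (-1)) := by
          rw [← ENNReal.ofReal_mul (Real.exp_pos _).le, ← ENNReal.ofReal_one,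
            ← ENNReal.ofReal_sub _ (Real.exp_pos _).le]
      _ = ENNReal.ofReal (1 - Real.exp (-1) * (1 - Real.exp (-s))) := by
          rw [← ENNReal.ofReal_add (by nlinarith [Real.exp_le_one_iff.mpr (by norm_num : (-1:ℝ) ≤ 0)]) (by positivity)]
          congr 1
          ring
  -- Chernoff bound
  have hcher : ∀ (c s : ℝ), 0 < s → ∀ k : ℕ,
      ℙ {ω | ∑ i ∈ Finset.range k, E i ω < c}
        ≤ ENNReal.ofReal (Real.exp (s*c))
          * (ENNReal.ofReal (1 - Real.exp (-1) * (1 - Real.exp (-s))))^k := by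
    intro c s hs k
    set g : ℕ → Ω → ENNReal := fun i ω => ENNReal.ofReal (Real.exp (-(s * E i ω))) with hg
    have hgmeas : ∀ i, Measurable (g i) := fun i =>
      ENNReal.measurable_ofReal.comp (Real.measurable_exp.comp ((hEmeas i).const_mul s).neg)
    have hgind : iIndepFun g ℙ := by
      have := hEindep.comp (fun _ x => ENNReal.ofReal (Real.exp (-(s * x))))
        (fun _ => ENNReal.measurable_ofReal.comp (Real.measurable_exp.comp
          (measurable_id.const_mul s).neg))
      exact this
    set F : Ω → ENNReal := fun ω => ENNReal.ofReal (Real.exp (s * (c - ∑ i ∈ Finset.range k, E i ω)))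
      with hF
    have hTm : Measurable fun ω => ∑ i ∈ Finset.range k, E i ω :=
      Finset.measurable_sum _ (fun i _ => hEmeas i)
    have hFm : Measurable F :=
      ENNReal.measurable_ofReal.comp (Real.measurable_exp.comp ((measurable_const.sub hTm).const_mul s))
    have h1 : ℙ {ω | ∑ i ∈ Finset.range k, E i ω < c} ≤ ∫⁻ ω, F ω ∂ℙ := by
      have hsub : {ω | ∑ i ∈ Finset.range k, E i ω < c} ⊆ {ω | 1 ≤ F ω} := by
        intro ω hω
        simp only [Set.mem_setOf_eq] at hω ⊢
        rw [hF]
        have h0 : (0:ℝ) ≤ s * (c - ∑ i ∈ Finset.range k, E i ω) := by nlinarith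
        calc (1:ENNReal) = ENNReal.ofReal (Real.exp 0) := by simp
          _ ≤ _ := ENNReal.ofReal_le_ofReal (Real.exp_le_exp.2 h0)
      calc ℙ {ω | ∑ i ∈ Finset.range k, E i ω < c} ≤ ℙ {ω | 1 ≤ F ω} := measure_mono hsub
        _ = 1 * ℙ {ω | 1 ≤ F ω} := (one_mul _).symm
        _ ≤ ∫⁻ ω, F ω ∂ℙ := mul_meas_ge_le_lintegral₀ hFm.aemeasurable 1
    have hFeq : ∀ ω, F ω = ENNReal.ofReal (Real.exp (s*c)) * ∏ i ∈ Finset.range k, g i ω := by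
      intro ω
      rw [hF, hg]
      simp only
      rw [← ENNReal.ofReal_prod_of_nonneg (fun i _ => (Real.exp_pos _).le),
        ← ENNReal.ofReal_mul (Real.exp_pos _).le, ← Real.exp_sum, ← Real.exp_add]
      congr 1
      rw [Finset.sum_neg_distrib, ← Finset.mul_sum]
      ring
    calc ℙ {ω | ∑ i ∈ Finset.range k, E i ω < c} ≤ ∫⁻ ω, F ω ∂ℙ := h1
      _ = ENNReal.ofReal (Real.exp (s*c)) * ∫⁻ ω, ∏ i ∈ Finset.range k, g i ω ∂ℙ := by
          simp_rw [hFeq]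
          rw [lintegral_const_mul _ (Finset.measurable_prod _ fun i _ => hgmeas i)]
      _ = ENNReal.ofReal (Real.exp (s*c)) * ∏ i ∈ Finset.range k, ∫⁻ ω, g i ω ∂ℙ := by
          rw [sic_aux_lintegral_prod g hgmeas hgind k]
      _ ≤ ENNReal.ofReal (Real.exp (s*c))
            * ∏ _i ∈ Finset.range k, ENNReal.ofReal (1 - Real.exp (-1) * (1 - Real.exp (-s))) :=
          mul_le_mul_right (Finset.prod_le_prod' fun i _ => hfact s hs i) _
      _ = _ := by rw [Finset.prod_const, Finset.card_range]
  -- event inclusion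
  have hsub : ∀ θ : ℝ, 0 < θ → ∀ k : ℕ,
      ℙ {ω | ∀ i, 1 ≤ i → i ≤ k + 1 → θ * (I i ω + W) < (ξ i ω)⁻¹}
        ≤ ℙ {ω | ∑ i ∈ Finset.range (k+1), E i ω < a * (θ*W) ^ (-β : ℝ)} := by
    intro θ hθ k
    refine measure_mono_ae ?_
    filter_upwards [hA] with ω hpos hev
    show ∑ i ∈ Finset.range (k+1), E i ω < a * (θ*W) ^ (-β:ℝ)
    have hTpos : ∀ m : ℕ, 1 ≤ m → 0 < ∑ i ∈ Finset.range m, E i ω := fun m hm =>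
      Finset.sum_pos (fun i _ => hpos i) (Finset.nonempty_range_iff.2 (by omega))
    have hξpos : ∀ m : ℕ, 1 ≤ m → 0 < ξ m ω := fun m hm => by
      rw [hξ]; exact Real.rpow_pos_of_pos (div_pos (hTpos m hm) ha) _
    have hInn : 0 ≤ I (k+1) ω := by
      rw [hI]; exact tsum_nonneg fun j => inv_nonneg.2 (hξpos _ (by omega)).le
    have h1 := hev (k+1) (by omega) le_rfl
    have hθW : 0 < θ * W := mul_pos hθ hW
    have h2 : θ * W < (ξ (k+1) ω)⁻¹ := lt_of_le_of_lt (by nlinarith) h1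
    have h3 : ξ (k+1) ω < (θ*W)⁻¹ := by
      have h := inv_strictAnti₀ hθW h2
      rwa [inv_inv] at h
    have hT := hTpos (k+1) (by omega)
    have hTa : (0:ℝ) < (∑ i ∈ Finset.range (k+1), E i ω) / a := div_pos hT ha
    have h4 : ((∑ i ∈ Finset.range (k+1), E i ω) / a) ^ (1/β : ℝ) < (θ*W)⁻¹ := by
      rw [← hξ]; exact h3
    have h5 := Real.rpow_lt_rpow (Real.rpow_nonneg hTa.le _) h4 hβ0
    rw [← Real.rpow_mul hTa.le, one_div, inv_mul_cancel₀ (ne_of_gt hβ0), Real.rpow_one] at h5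
    have h6 : ((θ*W)⁻¹ : ℝ) ^ (β:ℝ) = (θ*W) ^ (-β : ℝ) := by
      rw [Real.inv_rpow hθW.le, ← Real.rpow_neg hθW.le]
    rw [h6] at h5
    calc ∑ i ∈ Finset.range (k+1), E i ω
        = (∑ i ∈ Finset.range (k+1), E i ω) / a * a := by field_simp
      _ < (θ*W) ^ (-β : ℝ) * a := by
          exact mul_lt_mul_of_pos_right h5 ha
      _ = a * (θ*W) ^ (-β : ℝ) := mul_comm _ _
  -- main quantitative bound
  set K : ℝ := 2 * Real.exp 1 * Real.exp 1 * a * W ^ (-β : ℝ) with hK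
  have hbound : ∀ θ : ℝ, θ ∈ Set.Ioo 0 (a ^ (1/β:ℝ) / W) →
      R θ ≤ ENNReal.ofReal (K * θ ^ (1 - β : ℝ)) := by
    rw [hK]
    rintro θ ⟨hθ0, hθ1⟩
    set c : ℝ := a * (θ*W) ^ (-β : ℝ) with hc
    have hθW : 0 < θ * W := mul_pos hθ0 hW
    have hc1 : 1 ≤ c := by
      have h1 : θ * W < a ^ (1/β:ℝ) := (lt_div_iff₀ hW).1 hθ1
      have h2 : (θ*W) ^ (β:ℝ) ≤ a := by
        have h := Real.rpow_le_rpow hθW.le h1.le hβ0.le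
        rwa [← Real.rpow_mul ha.le, one_div, inv_mul_cancel₀ hβ0.ne', Real.rpow_one] at h
      have h4 : 0 < (θ*W) ^ (β:ℝ) := Real.rpow_pos_of_pos hθW β
      rw [hc, Real.rpow_neg hθW.le, ← div_eq_mul_inv]
      rw [le_div_iff₀ h4, one_mul]
      exact h2
    have hcpos : 0 < c := lt_of_lt_of_le one_pos hc1
    set s : ℝ := 1 / c with hs
    have hs0 : 0 < s := by positivity
    have hs1 : s ≤ 1 := by rw [hs, div_le_one hcpos]; exact hc1
    have he2 : (1:ℝ) ≤ Real.exp 1 := by nlinarith [Real.add_one_le_exp 1]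
    have h2ec : (1:ℝ) ≤ 2 * Real.exp 1 * c := by nlinarith
    have hfrac : 1/(2*Real.exp 1*c) ≤ 1 := by
      rw [div_le_one (by positivity)]; exact h2ec
    set ρ : ℝ := 1 - Real.exp (-1) * (1 - Real.exp (-s)) with hρ
    have hexps : Real.exp (-s) ≤ 1 := by rw [Real.exp_le_one_iff]; linarith
    have hρ1 : ρ ≤ 1 := by nlinarith [Real.exp_pos (-1)]
    have hρle : ρ ≤ 1 - 1/(2 * Real.exp 1 * c) := by
      have he : Real.exp (-s) ≤ 1 - s/2 := by
        have h1 : 1 + s ≤ Real.exp s := by linarith [Real.add_one_le_exp s]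
        have h4 : Real.exp (-s) * Real.exp s = 1 := by rw [← Real.exp_add]; simp
        nlinarith [Real.exp_pos (-s), Real.exp_pos s,
          mul_le_mul_of_nonneg_left h1 (Real.exp_pos (-s)).le]
      have he1 : Real.exp (-1) = (Real.exp 1)⁻¹ := Real.exp_neg 1
      have h2 : s/2 ≤ 1 - Real.exp (-s) := by linarith
      calc ρ ≤ 1 - Real.exp (-1) * (s/2) := by nlinarith [Real.exp_pos (-1)]
        _ = 1 - 1/(2*Real.exp 1 * c) := by
            rw [he1, hs]
            field_simp
    have hsum : (∑' k : ℕ, ℙ {ω | ∀ i, 1 ≤ i → i ≤ k + 1 → θ * (I i ω + W) < (ξ i ω)⁻¹})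
        ≤ ENNReal.ofReal (Real.exp 1) * ENNReal.ofReal (2 * Real.exp 1 * c) := by
      have hsc : s * c = 1 := by rw [hs]; field_simp
      have hterm : ∀ k : ℕ,
          ℙ {ω | ∀ i, 1 ≤ i → i ≤ k + 1 → θ * (I i ω + W) < (ξ i ω)⁻¹}
            ≤ ENNReal.ofReal (Real.exp 1) * (ENNReal.ofReal ρ)^(k+1) := by
        intro k
        have h1 := (hsub θ hθ0 k).trans (hcher c s hs0 (k+1))
        rwa [hsc] at h1
      have hgeo : (∑' k : ℕ, ENNReal.ofReal (Real.exp 1) * (ENNReal.ofReal ρ)^(k+1))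
          = ENNReal.ofReal (Real.exp 1) * ((ENNReal.ofReal ρ) * (1 - ENNReal.ofReal ρ)⁻¹) := by
        rw [ENNReal.tsum_mul_left]
        congr 1
        simp_rw [pow_succ']
        rw [ENNReal.tsum_mul_left, ENNReal.tsum_geometric]
      have hinv : (1 - ENNReal.ofReal ρ)⁻¹ ≤ ENNReal.ofReal (2*Real.exp 1*c) := by
        have hpos2 : (0:ℝ) < 1/(2*Real.exp 1*c) := by positivity
        have h2 : ENNReal.ofReal ρ ≤ ENNReal.ofReal (1 - 1/(2*Real.exp 1*c)) :=
          ENNReal.ofReal_le_ofReal hρle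
        have h3 : ENNReal.ofReal (1 - 1/(2*Real.exp 1*c)) + ENNReal.ofReal (1/(2*Real.exp 1*c)) = 1 := by
          rw [← ENNReal.ofReal_add (by linarith) hpos2.le]
          norm_num
        have h4 : ENNReal.ofReal (1/(2*Real.exp 1*c)) ≤ 1 - ENNReal.ofReal ρ := by
          have h5 : ENNReal.ofReal (1/(2*Real.exp 1*c))
              = 1 - ENNReal.ofReal (1 - 1/(2*Real.exp 1*c)) := by
            rw [← h3, ENNReal.add_sub_cancel_left ENNReal.ofReal_ne_top]
          rw [h5]
          exact tsub_le_tsub_left h2 1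
        calc (1 - ENNReal.ofReal ρ)⁻¹ ≤ (ENNReal.ofReal (1/(2*Real.exp 1*c)))⁻¹ :=
              ENNReal.inv_le_inv' h4
          _ = ENNReal.ofReal (2*Real.exp 1*c) := by
              rw [one_div, ENNReal.ofReal_inv_of_pos (by positivity : (0:ℝ) < 2*Real.exp 1*c),
                inv_inv]
      calc (∑' k : ℕ, ℙ {ω | ∀ i, 1 ≤ i → i ≤ k + 1 → θ * (I i ω + W) < (ξ i ω)⁻¹})
          ≤ ∑' k : ℕ, ENNReal.ofReal (Real.exp 1) * (ENNReal.ofReal ρ)^(k+1) :=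
            ENNReal.tsum_le_tsum hterm
        _ = ENNReal.ofReal (Real.exp 1) * ((ENNReal.ofReal ρ) * (1 - ENNReal.ofReal ρ)⁻¹) := hgeo
        _ ≤ ENNReal.ofReal (Real.exp 1) * (1 * ENNReal.ofReal (2*Real.exp 1*c)) := by
            gcongr
            exact ENNReal.ofReal_le_one.2 hρ1
        _ = ENNReal.ofReal (Real.exp 1) * ENNReal.ofReal (2*Real.exp 1*c) := by rw [one_mul]
    have hlog : Real.log (1+θ) ≤ θ := by
      have h := Real.log_le_sub_one_of_pos (show (0:ℝ) < 1+θ by linarith)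
      linarith
    rw [hR θ]
    calc ENNReal.ofReal (Real.log (1 + θ))
          * ∑' k : ℕ, ℙ {ω | ∀ i, 1 ≤ i → i ≤ k + 1 → θ * (I i ω + W) < (ξ i ω)⁻¹}
        ≤ ENNReal.ofReal θ * (ENNReal.ofReal (Real.exp 1) * ENNReal.ofReal (2*Real.exp 1*c)) :=
          mul_le_mul' (ENNReal.ofReal_le_ofReal hlog) hsum
      _ = ENNReal.ofReal (θ * (Real.exp 1 * (2*Real.exp 1*c))) := by
          rw [ENNReal.ofReal_mul hθ0.le, ENNReal.ofReal_mul (Real.exp_pos 1).le]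
      _ = ENNReal.ofReal (2 * Real.exp 1 * Real.exp 1 * a * W ^ (-β : ℝ) * θ ^ (1 - β : ℝ)) := by
          congr 1
          rw [hc, Real.mul_rpow hθ0.le hW.le,
            show (1-β:ℝ) = 1 + (-β) by ring, Real.rpow_add hθ0, Real.rpow_one]
          ring
  -- squeeze
  have hθ₀ : 0 < a ^ (1/β:ℝ) / W := div_pos (Real.rpow_pos_of_pos ha _) hW
  have hev : ∀ᶠ θ in nhdsWithin 0 (Set.Ioi 0), R θ ≤ ENNReal.ofReal (K * θ ^ (1-β:ℝ)) := by
    filter_upwards [Ioo_mem_nhdsGT_of_mem (Set.left_mem_Ico.2 hθ₀)] with θ hθ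
    exact hbound θ hθ
  have hlim : Tendsto (fun θ:ℝ => ENNReal.ofReal (K * θ ^ (1-β:ℝ)))
      (nhdsWithin 0 (Set.Ioi 0)) (nhds 0) := by
    have h1 : Tendsto (fun θ:ℝ => θ ^ (1-β:ℝ)) (nhdsWithin 0 (Set.Ioi 0)) (nhds 0) := by
      have h := (Real.continuousAt_rpow_const 0 (1-β) (Or.inr (by linarith))).continuousWithinAt
        (s := Set.Ioi (0:ℝ))
      have h' := h.tendsto
      rwa [Real.zero_rpow (by intro hc; linarith [hc] : (1:ℝ)-β ≠ 0)] at h'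
    have h2 := h1.const_mul K
    rw [mul_zero] at h2
    have h3 := (ENNReal.continuous_ofReal.tendsto 0).comp h2
    rwa [ENNReal.ofReal_zero] at h3
  exact tendsto_of_tendsto_of_tendsto_of_le_of_le' tendsto_const_nhds hlim
    (Filter.Eventually.of_forall fun θ => zero_le) hev
end

section
/- Let 𝒦 ⊂ {1,2,3,…} be a finite set of indices with |𝒦| = k ≥ 1, and suppose that ξ_i^{−1} > θ · Σ_{j ∉ 𝒦} ξ_j^{−1} for every i ∈ 𝒦. Then ξ_i^{−1} > θ · Σ_{j > k} ξ_j^{−1} for every 1 ≤ i ≤ k. Moreover, if θ ≥ 1, then necessarily 𝒦 = {1, 2, …, k}. -/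
/-- Unique decodable set: let `(ξ_i)_{i≥1}` be a nondecreasing sequence of
positive reals with summable inverses, and `𝒦` a `k`-element set of indices `≥ 1` such that
`ξ_i⁻¹ > θ·Σ_{j ≥ 1, j ∉ 𝒦} ξ_j⁻¹` for all `i ∈ 𝒦`. Then `ξ_i⁻¹ > θ·Σ_{j > k} ξ_j⁻¹` for all
`1 ≤ i ≤ k`; moreover, if `θ ≥ 1`, then `𝒦 = {1, …, k}`. -/
theorem unique_decodable_set
    (θ : ℝ) (hθ : 0 < θ) (ξ : ℕ → ℝ)
    (hpos : ∀ i, 1 ≤ i → 0 < ξ i)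
    (hmono : ∀ i j, 1 ≤ i → i ≤ j → ξ i ≤ ξ j)
    (hsum : Summable fun j : ℕ => (ξ (j + 1))⁻¹)
    (𝒦 : Finset ℕ) (h𝒦 : ∀ i ∈ 𝒦, 1 ≤ i)
    (k : ℕ) (hk : 1 ≤ k) (hcard : 𝒦.card = k)
    (hdec : ∀ i ∈ 𝒦, θ * (∑' j : {j : ℕ // 1 ≤ j ∧ j ∉ 𝒦}, (ξ j)⁻¹) < (ξ i)⁻¹) :
    (∀ i, 1 ≤ i → i ≤ k → θ * (∑' j : ℕ, (ξ (k + 1 + j))⁻¹) < (ξ i)⁻¹)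
    ∧ (1 ≤ θ → 𝒦 = Finset.Icc 1 k) := by
  classical
  -- the globally defined summand
  set g : ℕ → ℝ := fun j => if 1 ≤ j then (ξ j)⁻¹ else 0 with hgdef
  have hg1 : ∀ j, 1 ≤ j → g j = (ξ j)⁻¹ := fun j h => if_pos h
  have hg0 : ∀ j, 0 ≤ g j := by
    intro j
    by_cases h : 1 ≤ j
    · rw [hg1 j h]; exact (inv_pos.mpr (hpos j h)).le
    · simp [hgdef, if_neg h]
  have hgsum : Summable g := by
    refine (summable_nat_add_iff 1).mp ?_
    have : (fun n => g (n + 1)) = fun n : ℕ => (ξ (n + 1))⁻¹ := by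
      funext n; exact hg1 (n + 1) (Nat.succ_le_succ (Nat.zero_le n))
    rw [this]; exact hsum
  have hinv : ∀ i j, 1 ≤ i → i ≤ j → (ξ j)⁻¹ ≤ (ξ i)⁻¹ := fun i j h1 hij =>
    inv_anti₀ (hpos i h1) (hmono i j h1 hij)
  -- sets
  set B : Set ℕ := {j | 1 ≤ j ∧ j ∉ 𝒦} with hBdef
  set A : Set ℕ := {j | j ∉ Finset.range (k + 1)} with hAdef
  have hAmem : ∀ j, j ∈ A ↔ k + 1 ≤ j := by
    intro j; simp [hAdef, Finset.mem_range, Nat.not_lt]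
  set C : Set ℕ := A \ ↑𝒦 with hCdef
  set Kout : Finset ℕ := 𝒦.filter (fun j => k + 1 ≤ j) with hKoutdef
  set Kin : Finset ℕ := 𝒦.filter (fun j => ¬ (k + 1 ≤ j)) with hKindef
  set Bfin : Finset ℕ := (Finset.Icc 1 k) \ 𝒦 with hBfindef
  -- S in terms of g
  have hSg : (∑' j : {j : ℕ // 1 ≤ j ∧ j ∉ 𝒦}, (ξ j)⁻¹) = ∑' j : B, g j :=
    tsum_congr fun j => (hg1 j j.2.1).symm
  -- split A
  have hAeq : A = C ∪ ↑Kout := by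
    ext j
    simp only [hCdef, hKoutdef, Set.mem_union, Set.mem_diff, Finset.coe_filter,
      Set.mem_setOf_eq, Finset.mem_coe, hAmem]
    constructor
    · intro hj
      by_cases h : j ∈ 𝒦
      · exact Or.inr ⟨h, hj⟩
      · exact Or.inl ⟨hj, h⟩
    · rintro (⟨h1, _⟩ | ⟨_, h2⟩) <;> [exact h1; exact h2]
  have hBeq : B = C ∪ ↑Bfin := by
    ext j
    simp only [hBdef, hCdef, hBfindef, Set.mem_union, Set.mem_diff, Finset.coe_sdiff,
      Finset.coe_Icc, Set.mem_setOf_eq, Finset.mem_coe, Set.mem_Icc, hAmem]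
    constructor
    · rintro ⟨h1, h2⟩
      by_cases h : k + 1 ≤ j
      · exact Or.inl ⟨h, h2⟩
      · exact Or.inr ⟨⟨h1, by omega⟩, h2⟩
    · rintro (⟨h1, h2⟩ | ⟨⟨h1, h2⟩, h3⟩)
      · exact ⟨by omega, h2⟩
      · exact ⟨h1, h3⟩
  have hdisjA : Disjoint C (↑Kout : Set ℕ) := by
    rw [Set.disjoint_left]
    rintro j ⟨_, hj2⟩ hj
    exact hj2 (Finset.mem_coe.mp (Finset.filter_subset _ _ hj))
  have hdisjB : Disjoint C (↑Bfin : Set ℕ) := by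
    rw [Set.disjoint_left]
    rintro j ⟨hj1, _⟩ hj
    have := Finset.mem_sdiff.mp hj
    have := (Finset.mem_Icc.mp this.1).2
    have := (hAmem j).mp hj1
    omega
  -- tsum splits
  have hTsplit : (∑' j : A, g j) = (∑' j : C, g j) + ∑ j ∈ Kout, g j := by
    rw [hAeq, Summable.tsum_union_disjoint hdisjA (hgsum.subtype _) (hgsum.subtype _),
      Finset.tsum_subtype' Kout g]
  have hSsplit : (∑' j : B, g j) = (∑' j : C, g j) + ∑ j ∈ Bfin, g j := by
    rw [hBeq, Summable.tsum_union_disjoint hdisjB (hgsum.subtype _) (hgsum.subtype _),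
      Finset.tsum_subtype' Bfin g]
  -- card facts
  have hKinIcc : Finset.Icc 1 k ∩ 𝒦 = Kin := by
    ext j
    simp only [Finset.mem_inter, Finset.mem_Icc, hKindef, Finset.mem_filter, Nat.not_le]
    constructor
    · rintro ⟨⟨_, h2⟩, h3⟩; exact ⟨h3, by omega⟩
    · rintro ⟨h1, h2⟩; exact ⟨⟨h𝒦 j h1, by omega⟩, h1⟩
  have hcards : Kout.card = Bfin.card := by
    have h1 : Kout.card + Kin.card = k := by
      rw [← hcard]; exact Finset.card_filter_add_card_filter_not _
    have h2 : Bfin.card + Kin.card = k := by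
      have := Finset.card_sdiff_add_card_inter (Finset.Icc 1 k) 𝒦
      rw [hKinIcc] at this
      simpa [Nat.card_Icc] using this
    omega
  -- finite sum comparison
  have hfin : ∑ j ∈ Kout, g j ≤ ∑ j ∈ Bfin, g j := by
    calc ∑ j ∈ Kout, g j ≤ Kout.card • (ξ (k + 1))⁻¹ := by
          refine Finset.sum_le_card_nsmul _ _ _ fun j hj => ?_
          have hj' := Finset.mem_filter.mp hj
          rw [hg1 j (by omega)]
          exact hinv (k + 1) j (by omega) hj'.2
      _ = Bfin.card • (ξ (k + 1))⁻¹ := by rw [hcards]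
      _ ≤ ∑ j ∈ Bfin, g j := by
          refine Finset.card_nsmul_le_sum _ _ _ fun j hj => ?_
          have hj' := Finset.mem_sdiff.mp hj
          have hj'' := Finset.mem_Icc.mp hj'.1
          rw [hg1 j hj''.1]
          exact hinv j (k + 1) hj''.1 (by omega)
  have hTS : (∑' j : A, g j) ≤ ∑' j : B, g j := by
    rw [hTsplit, hSsplit]
    exact add_le_add (le_refl _) hfin
  -- expressing the tail sum
  have hTg : (∑' j : ℕ, (ξ (k + 1 + j))⁻¹) = ∑' j : A, g j := by
    have e1 : (∑' j : ℕ, (ξ (k + 1 + j))⁻¹) = ∑' j : ℕ, g (j + (k + 1)) := by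
      refine tsum_congr fun j => ?_
      rw [add_comm j (k + 1), hg1 (k + 1 + j) (by omega)]
    have e2 := hgsum.sum_add_tsum_nat_add (k + 1)
    have e3 := hgsum.sum_add_tsum_subtype_compl (Finset.range (k + 1))
    have e4 : (∑' j : A, g j) = ∑' (x : {x // x ∉ Finset.range (k + 1)}), g x := rfl
    rw [e1, e4]
    linarith
  constructor
  · intro i h1 hik
    obtain ⟨m, hm, him⟩ : ∃ m ∈ 𝒦, i ≤ m := by
      by_contra h
      push_neg at h
      have hsub : 𝒦 ⊆ Finset.Ico 1 i := fun m hm =>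
        Finset.mem_Ico.mpr ⟨h𝒦 m hm, h m hm⟩
      have := Finset.card_le_card hsub
      rw [hcard, Nat.card_Ico] at this
      omega
    have h2 : θ * (∑' j : A, g j) ≤ θ * ∑' j : B, g j :=
      mul_le_mul_of_nonneg_left hTS hθ.le
    have h3 := hdec m hm
    rw [hSg] at h3
    have h4 : (ξ m)⁻¹ ≤ (ξ i)⁻¹ := hinv i m h1 him
    rw [hTg]
    linarith
  · intro hθ1
    by_contra hne
    obtain ⟨m, hm, hmIcc⟩ : ∃ m ∈ 𝒦, m ∉ Finset.Icc 1 k := by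
      by_contra h
      push_neg at h
      exact hne (Finset.eq_of_subset_of_card_le (fun x hx => h x hx)
        (by simp [Nat.card_Icc, hcard]))
    have hmk : k < m := by
      have := h𝒦 m hm
      simp only [Finset.mem_Icc, not_and, not_le] at hmIcc
      omega
    have hKoutpos : 0 < Kout.card := Finset.card_pos.mpr ⟨m, Finset.mem_filter.mpr ⟨hm, by omega⟩⟩
    have hBfinpos : 0 < Bfin.card := by omega
    obtain ⟨n, hn⟩ := Finset.card_pos.mp hBfinpos
    have hn' := Finset.mem_sdiff.mp hn
    have hn'' := Finset.mem_Icc.mp hn'.1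
    have hnB : n ∈ B := ⟨hn''.1, hn'.2⟩
    have h1 : (ξ n)⁻¹ ≤ ∑' j : B, g j := by
      have := Summable.le_tsum (hgsum.subtype B) ⟨n, hnB⟩ (fun j _ => hg0 _)
      rwa [Function.comp_apply, hg1 n hn''.1] at this
    have h2 : (ξ m)⁻¹ ≤ (ξ n)⁻¹ := hinv n m hn''.1 (by omega)
    have h3 := hdec m hm
    rw [hSg] at h3
    have h4 : (0:ℝ) ≤ ∑' j : B, g j := tsum_nonneg fun j => hg0 j
    nlinarith
end

section
/- The coverage probability with (infinite) SIC capability — the probability that there exist an integer l ≥ 0 and an integer k ≥ 1 with t_k = 1 such that ξ_i^{−1} > θ I_i for all 1 ≤ i ≤ l and ξ_k^{−1} > θ I_l^{!k} — equals Σ_{k=1}^∞ (1−η)^{k−1} · η · p_k. -/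
open MeasureTheory ProbabilityTheory Real

open Filter Topology

section Core
variable {θ : ℝ} {a : ℕ → ℝ}



private lemma measurableSet_summable_aux {δ : Type*} [MeasurableSpace δ] {f : ℕ → δ → ℝ}
    (hf : ∀ i, Measurable (f i)) : MeasurableSet {x | Summable fun i => f i x} := by
  have h1 : {x | Summable fun i => f i x}
      = {x | ∃ c, Tendsto (fun N => ∑ i ∈ Finset.range N, |f i x|) atTop (𝓝 c)} := by
    ext x
    simp only [Set.mem_setOf_eq]
    constructor
    · intro h
      exact ⟨∑' i, |f i x|, h.abs.hasSum.tendsto_sum_nat⟩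
    · rintro ⟨c, hc⟩
      rw [← summable_abs_iff]
      have hmon : Monotone fun N => ∑ i ∈ Finset.range N, |f i x| := by
        intro m n hmn
        exact Finset.sum_le_sum_of_subset_of_nonneg (Finset.range_subset_range.2 hmn)
          (fun i _ _ => abs_nonneg _)
      exact summable_of_sum_range_le (fun i => abs_nonneg _) (fun n => hmon.ge_of_tendsto hc n)
  rw [h1]
  exact measurableSet_exists_tendsto
    (fun N => Finset.measurable_sum _ (fun i _ => (hf i).abs))

private lemma measurable_tsum_real {δ : Type*} [MeasurableSpace δ] {f : ℕ → δ → ℝ}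
    (hf : ∀ i, Measurable (f i)) : Measurable fun x => ∑' i, f i x := by
  have hS := measurableSet_summable_aux hf
  have heq : (fun x => ∑' i, f i x) = Set.indicator {x | Summable fun i => f i x}
      (fun x => liminf (fun N => ∑ i ∈ Finset.range N, f i x) atTop) := by
    funext x
    by_cases h : Summable fun i => f i x
    · rw [Set.indicator_of_mem (show x ∈ {x | Summable fun i => f i x} from h)]
      exact (h.hasSum.tendsto_sum_nat.liminf_eq).symm
    · rw [tsum_eq_zero_of_not_summable h, Set.indicator_of_notMem (show x ∉ {x | Summable fun i => f i x} from h)]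
  rw [heq]
  exact (Measurable.liminf (fun N => Finset.measurable_sum _ (fun i _ => hf i))).indicator hS

private def etail (k : ℕ) : ℕ ≃ {j : ℕ // k + 1 ≤ j} where
  toFun n := ⟨k + 1 + n, Nat.le_add_right _ _⟩
  invFun j := j.1 - (k + 1)
  left_inv n := by show k + 1 + n - (k + 1) = n; omega
  right_inv j := Subtype.ext (by show k + 1 + (j.1 - (k + 1)) = j.1; have := j.2; omega)

private lemma tsum_tail_eq (a : ℕ → ℝ) (k : ℕ) :
    ∑' (j : {j : ℕ // k + 1 ≤ j}), a j = ∑' n, a (k + 1 + n) :=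
  ((etail k).tsum_eq (fun j : {j : ℕ // k + 1 ≤ j} => a j)).symm

-- S2 : telescoping
private lemma tail_split (hs : Summable a) {i m : ℕ} (him : i ≤ m) :
    (∑' j, a (i + 1 + j)) = (∑ j ∈ Finset.Ico (i + 1) (m + 1), a j) + ∑' j, a (m + 1 + j) := by
  have hg : Summable fun j => a (i + 1 + j) := by
    refine ((summable_nat_add_iff (i + 1)).2 hs).congr (fun n => by rw [add_comm])
  have h := Summable.sum_add_tsum_nat_add (f := fun j => a (i + 1 + j)) (m - i) hg
  have h2 : (∑' j, a (i + 1 + (j + (m - i)))) = ∑' j, a (m + 1 + j) :=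
    tsum_congr (fun j => congrArg a (by omega))
  have h3 : (∑ j ∈ Finset.Ico (i + 1) (m + 1), a j)
      = ∑ j ∈ Finset.range (m - i), a (i + 1 + j) := by
    rw [Finset.sum_Ico_eq_sum_range]
    have : m + 1 - (i + 1) = m - i := by omega
    rw [this]
  rw [h3, ← h, h2]

-- S3 : J formula
private lemma jsum_split (hs : Summable a) {l k : ℕ} (hlk : l + 1 ≤ k) :
    (∑' (j : {j : ℕ // l + 1 ≤ j ∧ j ≠ k}), a j)
      = (∑ j ∈ Finset.Ico (l + 1) k, a j) + ∑' j, a (k + 1 + j) := by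
  have h0 : (∑' (j : {j : ℕ // l + 1 ≤ j ∧ j ≠ k}), a j)
      = ∑' j, ({j : ℕ | l + 1 ≤ j ∧ j ≠ k}).indicator a j :=
    tsum_subtype {j : ℕ | l + 1 ≤ j ∧ j ≠ k} a
  have hsplit : ∀ j, ({j : ℕ | l + 1 ≤ j ∧ j ≠ k}).indicator a j
      = (↑(Finset.Ico (l + 1) k) : Set ℕ).indicator a j
        + ({j : ℕ | k + 1 ≤ j}).indicator a j := by
    intro j
    simp only [Set.indicator_apply, Finset.coe_Ico, Set.mem_Ico, Set.mem_setOf_eq]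
    rcases (show (j ≤ l) ∨ (l + 1 ≤ j ∧ j < k) ∨ j = k ∨ k + 1 ≤ j from by omega)
      with h | h | h | h
    · rw [if_neg (by omega), if_neg (by omega), if_neg (by omega)]; ring
    · rw [if_pos (by omega), if_pos (by omega), if_neg (by omega)]; ring
    · rw [if_neg (by omega), if_neg (by omega), if_neg (by omega)]; ring
    · rw [if_pos (by omega), if_neg (by omega), if_pos (by omega)]; ring
  have h1 : Summable ((↑(Finset.Ico (l + 1) k) : Set ℕ).indicator a) := by
    apply summable_of_ne_finset_zero (s := Finset.Ico (l + 1) k)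
    intro j hj
    exact Set.indicator_of_notMem (by simpa using hj) a
  have h2 : Summable (({j : ℕ | k + 1 ≤ j}).indicator a) := hs.indicator _
  rw [h0, tsum_congr hsplit, Summable.tsum_add h1 h2]
  congr 1
  · exact (sum_eq_tsum_indicator a (Finset.Ico (l + 1) k)).symm
  · rw [← tsum_subtype]
    exact tsum_tail_eq a k

private lemma jsum_not_summable (hs : ¬ Summable a) (l k : ℕ) :
    ¬ Summable (fun j : {j : ℕ // l + 1 ≤ j ∧ j ≠ k} => a j) := by
  intro h
  apply hs
  set s : Set ℕ := {j : ℕ | l + 1 ≤ j ∧ j ≠ k} with hsdef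
  have h1 : Summable (s.indicator a) := by
    rw [← summable_subtype_iff_indicator]
    exact h
  have h2 : Summable (sᶜ.indicator a) := by
    apply summable_of_ne_finset_zero (s := insert k (Finset.range (l + 1)))
    intro j hj
    apply Set.indicator_of_notMem
    simp only [Finset.mem_insert, Finset.mem_range, not_or, not_lt] at hj
    simp only [Set.mem_compl_iff, hsdef, Set.mem_setOf_eq, not_and, not_not]
    intro hc
    omega
  exact (h1.add h2).congr (fun b => Set.indicator_self_add_compl_apply s a b)

private lemma core_equiv {θ : ℝ} {a : ℕ → ℝ} (hθ : 0 < θ) (ha0 : a 0 = 0)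
    (hpos : ∀ j, 1 ≤ j → 0 < a j)
    (hmono : ∀ i j, 1 ≤ i → i ≤ j → a j ≤ a i)
    (Q : ℕ → Prop) :
    (∃ l k, 1 ≤ k ∧ Q k ∧ (∀ i, 1 ≤ i → i ≤ l → θ * (∑' j, a (i + 1 + j)) < a i)
        ∧ θ * (∑' (j : {j : ℕ // l + 1 ≤ j ∧ j ≠ k}), a j) < a k)
    ↔ (∃ k, 1 ≤ k ∧ Q k ∧ ∀ i, 1 ≤ i → i ≤ k → θ * (∑' j, a (i + 1 + j)) < a i) := by
  have hanon : ∀ j, 0 ≤ a j := by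
    intro j; rcases Nat.eq_zero_or_pos j with rfl | hj
    · exact le_of_eq ha0.symm
    · exact (hpos j hj).le
  by_cases hs : Summable a
  case neg =>
    have hI0 : ∀ i : ℕ, (∑' j, a (i + 1 + j)) = 0 := by
      intro i
      apply tsum_eq_zero_of_not_summable
      intro h
      exact hs ((summable_nat_add_iff (i + 1)).1 (h.congr (fun n => congrArg a (by omega))))
    have hJ0 : ∀ l k : ℕ, (∑' (j : {j : ℕ // l + 1 ≤ j ∧ j ≠ k}), a j) = 0 :=
      fun l k => tsum_eq_zero_of_not_summable (jsum_not_summable hs l k)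
    constructor
    · rintro ⟨l, k, hk, hQ, -, -⟩
      refine ⟨k, hk, hQ, fun i hi _ => ?_⟩
      rw [hI0 i, mul_zero]; exact hpos i hi
    · rintro ⟨k, hk, hQ, -⟩
      refine ⟨0, k, hk, hQ, fun i hi hle => absurd hle (by omega), ?_⟩
      rw [hJ0, mul_zero]; exact hpos k hk
  case pos =>
    constructor
    · rintro ⟨l, k, hk, hQ, hchain, hJ⟩
      refine ⟨k, hk, hQ, fun i hi hik => ?_⟩
      by_cases hil : i ≤ l
      · exact hchain i hi hil
      · push_neg at hil
        have hlk : l + 1 ≤ k := le_trans hil hik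
        have hIJ : (∑' j, a (i + 1 + j))
            ≤ (∑' (j : {j : ℕ // l + 1 ≤ j ∧ j ≠ k}), a j) := by
          rw [jsum_split hs hlk, tail_split hs hik]
          apply add_le_add_left
          rcases eq_or_lt_of_le hik with rfl | hik'
          · rw [Finset.Ico_self, Finset.sum_empty]
            exact Finset.sum_nonneg fun j _ => hanon j
          · have h1 : (∑ j ∈ Finset.Ico (i + 1) (k + 1), a j)
                = (∑ j ∈ Finset.Ico (i + 1) k, a j) + a k :=
              Finset.sum_Ico_succ_top hik' _
            have h2 : (∑ j ∈ Finset.Ico (l + 1) k, a j)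
                = (∑ j ∈ Finset.Ico (l + 1) (i + 1), a j)
                  + ∑ j ∈ Finset.Ico (i + 1) k, a j :=
              (Finset.sum_Ico_consecutive _ (by omega) (by omega)).symm
            rw [h1, h2]
            have h3 : a k ≤ ∑ j ∈ Finset.Ico (l + 1) (i + 1), a j := by
              calc a k ≤ a (l + 1) := hmono (l + 1) k (by omega) (by omega)
                _ ≤ _ := Finset.single_le_sum (fun j _ => hanon j)
                    (by simp only [Finset.mem_Ico]; omega)
            linarith
        calc θ * (∑' j, a (i + 1 + j))
            ≤ θ * (∑' (j : {j : ℕ // l + 1 ≤ j ∧ j ≠ k}), a j) :=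
              mul_le_mul_of_nonneg_left hIJ hθ.le
          _ < a k := hJ
          _ ≤ a i := hmono i k hi hik
    · rintro ⟨k, hk, hQ, hchain⟩
      refine ⟨k - 1, k, hk, hQ, fun i hi hil => hchain i hi (by omega), ?_⟩
      have hlk : (k - 1) + 1 ≤ k := by omega
      rw [jsum_split hs hlk]
      have he : Finset.Ico ((k - 1) + 1) k = ∅ := by
        rw [Finset.Ico_eq_empty_iff]; omega
      rw [he, Finset.sum_empty, zero_add]
      exact hchain k hk le_rfl
/-- the coverage probability with infinite SIC capability equals
`Σ_{k=1}^∞ (1−η)^{k−1} η p_k`. -/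
theorem sic_hcn_coverage_infinite
    {Ω : Type*} [MeasureSpace Ω] [IsProbabilityMeasure (ℙ : Measure Ω)]
    (β θ η : ℝ) (hβ : β ∈ Set.Ioo (0:ℝ) 1) (hθ : 0 < θ) (hη : η ∈ Set.Ioc (0:ℝ) 1)
    (E : ℕ → Ω → ℝ) (hEmeas : ∀ i, Measurable (E i))
    -- Bernoulli marks: t k = 1 iff the k-th strongest BS is accessible
    (t : ℕ → Ω → ℝ) (htmeas : ∀ k, Measurable (t k))
    (ht01 : ∀ k ω, t k ω = 0 ∨ t k ω = 1)
    (htdist : ∀ k, ℙ {ω | t k ω = 1} = ENNReal.ofReal η)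
    -- the E's and t's are jointly independent
    (hindep : iIndepFun (Sum.elim E t) ℙ)
    (hEdist : ∀ i, ∀ x : ℝ, 0 ≤ x → ℙ {ω | x < E i ω} = ENNReal.ofReal (Real.exp (-x)))
    (ξ : ℕ → Ω → ℝ)
    (hξ : ∀ k ω, ξ k ω = (∑ i ∈ Finset.range k, E i ω) ^ (1/β : ℝ))
    (I : ℕ → Ω → ℝ) (hI : ∀ k ω, I k ω = ∑' j : ℕ, (ξ (k + 1 + j) ω)⁻¹)
    -- I_l^{!k} = Σ_{j ≥ l+1, j ≠ k} ξ_j⁻¹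
    (J : ℕ → ℕ → Ω → ℝ)
    (hJ : ∀ l k ω, J l k ω = ∑' j : {j : ℕ // l + 1 ≤ j ∧ j ≠ k}, (ξ j ω)⁻¹)
    (p : ℕ → ℝ)
    (hp : ∀ k, p k = (ℙ {ω | ∀ i, 1 ≤ i → i ≤ k → θ * I i ω < (ξ i ω)⁻¹}).toReal) :
    (ℙ {ω | ∃ l k : ℕ, 1 ≤ k ∧ t k ω = 1
        ∧ (∀ i, 1 ≤ i → i ≤ l → θ * I i ω < (ξ i ω)⁻¹)
        ∧ θ * J l k ω < (ξ k ω)⁻¹}).toReal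
      = ∑' k : ℕ, (1 - η) ^ (k : ℕ) * η * p (k + 1) := by
  classical
  obtain ⟨hβ0, hβ1⟩ := hβ
  -- the chain sets and first-accessible sets
  set A : ℕ → Set Ω := fun k => {ω | ∀ i, 1 ≤ i → i ≤ k → θ * I i ω < (ξ i ω)⁻¹} with hAdef
  set C : ℕ → Set Ω := fun k =>
    {ω | t k ω = 1 ∧ ∀ j, 1 ≤ j → j < k → t j ω = 0} with hCdef
  -- measurability of ξ, I, A, C w.r.t. arbitrary sub-σ-algebras
  have hξm : ∀ (m : MeasurableSpace Ω), (∀ i, Measurable[m] (E i)) →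
      ∀ k, Measurable[m] (ξ k) := by
    intro m hm k
    have h1 : Measurable[m] fun ω => (∑ i ∈ Finset.range k, E i ω) ^ (1/β : ℝ) :=
      (Real.continuous_rpow_const (by positivity)).measurable.comp
        (Finset.measurable_sum _ (fun i _ => hm i))
    exact (funext (hξ k) : ξ k = _) ▸ h1
  have hIm : ∀ (m : MeasurableSpace Ω), (∀ i, Measurable[m] (E i)) →
      ∀ k, Measurable[m] (I k) := by
    intro m hm k
    have h1 : Measurable[m] fun ω => ∑' j : ℕ, (ξ (k + 1 + j) ω)⁻¹ :=
      measurable_tsum_real (fun j => (hξm m hm (k + 1 + j)).inv)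
    exact (funext (hI k) : I k = _) ▸ h1
  have hAm : ∀ (m : MeasurableSpace Ω), (∀ i, Measurable[m] (E i)) →
      ∀ k, MeasurableSet[m] (A k) := by
    intro m hm k
    have h1 : A k = ⋂ (i : ℕ) (_ : 1 ≤ i) (_ : i ≤ k),
        {ω | θ * I i ω < (ξ i ω)⁻¹} := by
      ext ω; simp [hAdef, Set.mem_iInter]
    rw [h1]
    exact MeasurableSet.iInter fun i => MeasurableSet.iInter fun _ =>
      MeasurableSet.iInter fun _ =>
        measurableSet_lt (measurable_const.mul (hIm m hm i)) (hξm m hm i).inv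
  have hCm : ∀ (m : MeasurableSpace Ω), (∀ j, Measurable[m] (t j)) →
      ∀ k, MeasurableSet[m] (C k) := by
    intro m hm k
    have h1 : C k = (t k ⁻¹' {1}) ∩ ⋂ (j : ℕ) (_ : 1 ≤ j) (_ : j < k),
        t j ⁻¹' {0} := by
      ext ω; simp [hCdef, Set.mem_iInter]
    rw [h1]
    exact ((hm k) (measurableSet_singleton 1)).inter
      (MeasurableSet.iInter fun j => MeasurableSet.iInter fun _ =>
        MeasurableSet.iInter fun _ => (hm j) (measurableSet_singleton 0))
  -- a.s. all E i are positive
  have hNnull : ℙ (⋃ i, {ω | ¬ (0 < E i ω)}) = 0 := by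
    apply measure_iUnion_null
    intro i
    have h1 : ℙ {ω | 0 < E i ω} = 1 := by
      rw [hEdist i 0 le_rfl]; simp
    have hms : MeasurableSet {ω | 0 < E i ω} :=
      measurableSet_lt measurable_const (hEmeas i)
    have h2 : {ω | ¬ (0 < E i ω)} = {ω | 0 < E i ω}ᶜ := rfl
    rw [h2, measure_compl hms (measure_ne_top _ _), measure_univ, h1, tsub_self]
  -- the event coincides a.e. with the disjoint union
  have hae : ℙ {ω | ∃ l k : ℕ, 1 ≤ k ∧ t k ω = 1
        ∧ (∀ i, 1 ≤ i → i ≤ l → θ * I i ω < (ξ i ω)⁻¹)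
        ∧ θ * J l k ω < (ξ k ω)⁻¹}
      = ℙ (⋃ k : ℕ, C (k + 1) ∩ A (k + 1)) := by
    apply measure_congr
    rw [Filter.eventuallyEq_set]
    have hgood : ∀ᵐ ω ∂ℙ, ω ∉ ⋃ i, {ω | ¬ (0 < E i ω)} :=
      (measure_eq_zero_iff_ae_notMem).1 hNnull
    filter_upwards [hgood] with ω hω
    have hEpos : ∀ i, 0 < E i ω := by
      intro i
      by_contra h
      exact hω (Set.mem_iUnion.2 ⟨i, h⟩)
    set a : ℕ → ℝ := fun j => (ξ j ω)⁻¹ with hadef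
    have ha0 : a 0 = 0 := by
      simp only [hadef, hξ 0 ω, Finset.range_zero, Finset.sum_empty,
        Real.zero_rpow (by positivity : (1/β : ℝ) ≠ 0), inv_zero]
    have hsumpos : ∀ j : ℕ, 1 ≤ j → 0 < ∑ i ∈ Finset.range j, E i ω := by
      intro j hj
      exact Finset.sum_pos (fun i _ => hEpos i) ⟨0, Finset.mem_range.2 (by omega)⟩
    have hpos : ∀ j, 1 ≤ j → 0 < a j := by
      intro j hj
      simp only [hadef, hξ j ω]
      exact inv_pos.2 (Real.rpow_pos_of_pos (hsumpos j hj) _)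
    have hmono : ∀ i j, 1 ≤ i → i ≤ j → a j ≤ a i := by
      intro i j hi hij
      have h1 : (0:ℝ) < ∑ x ∈ Finset.range i, E x ω := hsumpos i hi
      have h2 : (∑ x ∈ Finset.range i, E x ω) ≤ ∑ x ∈ Finset.range j, E x ω :=
        Finset.sum_le_sum_of_subset_of_nonneg (Finset.range_subset_range.2 hij)
          (fun x _ _ => (hEpos x).le)
      have h3 : ξ i ω ≤ ξ j ω := by
        rw [hξ i ω, hξ j ω]
        exact Real.rpow_le_rpow h1.le h2 (by positivity)
      have h4 : 0 < ξ i ω := by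
        rw [hξ i ω]; exact Real.rpow_pos_of_pos h1 _
      exact inv_anti₀ h4 h3
    have hIa : ∀ i, I i ω = ∑' j, a (i + 1 + j) := fun i => hI i ω
    have hJa : ∀ l k, J l k ω
        = ∑' (j : {j : ℕ // l + 1 ≤ j ∧ j ≠ k}), a j := fun l k => hJ l k ω
    have hcore := core_equiv hθ ha0 hpos hmono (fun k => t k ω = 1)
    have hmem1 : (∃ l k : ℕ, 1 ≤ k ∧ t k ω = 1
        ∧ (∀ i, 1 ≤ i → i ≤ l → θ * I i ω < (ξ i ω)⁻¹)
        ∧ θ * J l k ω < (ξ k ω)⁻¹)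
        ↔ (∃ k, 1 ≤ k ∧ t k ω = 1 ∧ ∀ i, 1 ≤ i → i ≤ k →
            θ * (∑' j, a (i + 1 + j)) < a i) := by
      rw [← hcore]
      constructor
      · rintro ⟨l, k, hk, hQ, hch, hj⟩
        exact ⟨l, k, hk, hQ, fun i hi hil => by rw [← hIa i]; exact hch i hi hil,
          by rw [← hJa l k]; exact hj⟩
      · rintro ⟨l, k, hk, hQ, hch, hj⟩
        exact ⟨l, k, hk, hQ, fun i hi hil => by rw [hIa i]; exact hch i hi hil,
          by rw [hJa l k]; exact hj⟩
    have hmem2 : (∃ k, 1 ≤ k ∧ t k ω = 1 ∧ ∀ i, 1 ≤ i → i ≤ k →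
            θ * (∑' j, a (i + 1 + j)) < a i)
        ↔ ω ∈ ⋃ k : ℕ, C (k + 1) ∩ A (k + 1) := by
      constructor
      · rintro ⟨k, hk, hQ, hchain⟩
        have hex : ∃ n, 1 ≤ n ∧ t n ω = 1 := ⟨k, hk, hQ⟩
        have hk0spec := Nat.find_spec hex
        have hk0le : Nat.find hex ≤ k := Nat.find_le ⟨hk, hQ⟩
        have hk0min : ∀ j, j < Nat.find hex → ¬(1 ≤ j ∧ t j ω = 1) :=
          fun j hj => Nat.find_min hex hj
        have hk0eq : Nat.find hex - 1 + 1 = Nat.find hex := by omega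
        refine Set.mem_iUnion.2 ⟨Nat.find hex - 1, ?_, ?_⟩
        · rw [hk0eq]
          refine ⟨hk0spec.2, fun j h1 hj => ?_⟩
          rcases ht01 j ω with h0 | h1'
          · exact h0
          · exact absurd ⟨h1, h1'⟩ (hk0min j hj)
        · rw [hk0eq]
          intro i hi hik
          rw [hIa i]
          exact hchain i hi (le_trans hik hk0le)
      · intro h
        obtain ⟨n, hn⟩ := Set.mem_iUnion.1 h
        exact ⟨n + 1, by omega, hn.1.1, fun i hi hik => by
          rw [← hIa i]; exact hn.2 i hi hik⟩
    exact (hmem1.trans hmem2)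
  rw [hae]
  -- disjointness
  have hdisj : Pairwise (Function.onFun Disjoint fun k => C (k + 1) ∩ A (k + 1)) := by
    have key : ∀ m n : ℕ, m < n →
        Disjoint (C (m + 1) ∩ A (m + 1)) (C (n + 1) ∩ A (n + 1)) := by
      intro m n h
      rw [Set.disjoint_left]
      rintro ω ⟨hC1, -⟩ ⟨hC2, -⟩
      have h1 : t (m + 1) ω = 1 := hC1.1
      have h0 : t (m + 1) ω = 0 := hC2.2 (m + 1) (by omega) (by omega)
      rw [h0] at h1; norm_num at h1
    intro m n hmn
    rcases hmn.lt_or_gt with h | h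
    · exact key _ _ h
    · exact (key _ _ h).symm
  rw [measure_iUnion hdisj
    (fun n => ((hCm _ htmeas _).inter (hAm _ hEmeas _)))]
  -- independence
  have h_le : ∀ x : ℕ ⊕ ℕ,
      MeasurableSpace.comap (Sum.elim E t x) inferInstance
        ≤ (inferInstance : MeasurableSpace Ω) := by
    rintro (i | j)
    · exact (hEmeas i).comap_le
    · exact (htmeas j).comap_le
  have hInd : Indep
      (⨆ x ∈ Set.range (Sum.inl : ℕ → ℕ ⊕ ℕ),
        MeasurableSpace.comap (Sum.elim E t x) inferInstance)
      (⨆ x ∈ Set.range (Sum.inr : ℕ → ℕ ⊕ ℕ),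
        MeasurableSpace.comap (Sum.elim E t x) inferInstance) ℙ :=
    indep_iSup_of_disjoint h_le hindep.iIndep
      Set.isCompl_range_inl_range_inr.disjoint
  have hEM1 : ∀ i, Measurable[⨆ x ∈ Set.range (Sum.inl : ℕ → ℕ ⊕ ℕ),
      MeasurableSpace.comap (Sum.elim E t x) inferInstance] (E i) := by
    intro i
    exact measurable_iff_comap_le.2
      (le_biSup (f := fun x : ℕ ⊕ ℕ => MeasurableSpace.comap (Sum.elim E t x) inferInstance)
        (i := Sum.inl i) ⟨i, rfl⟩)
  have htM2 : ∀ j, Measurable[⨆ x ∈ Set.range (Sum.inr : ℕ → ℕ ⊕ ℕ),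
      MeasurableSpace.comap (Sum.elim E t x) inferInstance] (t j) := by
    intro j
    exact measurable_iff_comap_le.2
      (le_biSup (f := fun x : ℕ ⊕ ℕ => MeasurableSpace.comap (Sum.elim E t x) inferInstance)
        (i := Sum.inr j) ⟨j, rfl⟩)
  have hprod : ∀ k, ℙ (C k ∩ A k) = ℙ (C k) * ℙ (A k) := by
    intro k
    rw [Indep_iff] at hInd
    have := hInd (A k) (C k) (hAm _ hEM1 k) (hCm _ htM2 k)
    rw [Set.inter_comm, this, mul_comm]
  -- measure of C (k+1)
  have hCmeasure : ∀ k : ℕ, ℙ (C (k + 1)) = ENNReal.ofReal ((1 - η) ^ k * η) := by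
    intro k
    set s : ℕ ⊕ ℕ → Set Ω := Sum.elim (fun _ => Set.univ)
      (fun j => if j = k + 1 then {ω | t j ω = 1} else {ω | t j ω = 0}) with hsdef
    have hseteq : (⋂ x ∈ (Finset.Icc 1 (k + 1)).image Sum.inr, s x) = C (k + 1) := by
      ext ω
      simp only [Set.mem_iInter, Finset.mem_image, Finset.mem_Icc, hCdef,
        Set.mem_setOf_eq, hsdef]
      constructor
      · intro h
        constructor
        · have := h (Sum.inr (k + 1)) ⟨k + 1, ⟨by omega, le_rfl⟩, rfl⟩
          simpa using this
        · intro j h1 hj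
          have := h (Sum.inr j) ⟨j, ⟨h1, by omega⟩, rfl⟩
          simp only [Sum.elim_inr, if_neg (by omega : ¬ j = k + 1)] at this
          exact this
      · rintro ⟨h1, h0⟩ x hx
        obtain ⟨j, ⟨hj1, hj2⟩, rfl⟩ := hx
        by_cases hj : j = k + 1
        · subst hj; simpa using h1
        · simp only [Sum.elim_inr, if_neg hj]
          exact h0 j hj1 (by omega)
    have hsets : ∀ x ∈ (Finset.Icc 1 (k + 1)).image Sum.inr,
        MeasurableSet[MeasurableSpace.comap (Sum.elim E t x) inferInstance] (s x) := by
      intro x hx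
      obtain ⟨j, _, rfl⟩ := Finset.mem_image.1 hx
      by_cases hj : j = k + 1
      · subst hj
        simp only [hsdef, Sum.elim_inr, if_pos rfl]
        exact ⟨{1}, measurableSet_singleton 1, rfl⟩
      · simp only [hsdef, Sum.elim_inr, if_neg hj]
        exact ⟨{0}, measurableSet_singleton 0, rfl⟩
    have hbi := hindep.meas_biInter (S := (Finset.Icc 1 (k + 1)).image Sum.inr)
      (s := s) hsets
    rw [hseteq] at hbi
    rw [hbi, Finset.prod_image (fun a _ b _ h => Sum.inr.inj h)]
    have hval : ∀ j ∈ Finset.Icc 1 (k + 1), ℙ (s (Sum.inr j))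
        = if j = k + 1 then ENNReal.ofReal η else ENNReal.ofReal (1 - η) := by
      intro j hj
      by_cases h : j = k + 1
      · simp only [hsdef, Sum.elim_inr, if_pos h]
        exact htdist j
      · simp only [hsdef, Sum.elim_inr, if_neg h]
        have ht0set : {ω | t j ω = 0} = {ω | t j ω = 1}ᶜ := by
          ext ω
          simp only [Set.mem_setOf_eq, Set.mem_compl_iff]
          constructor
          · intro h0 h1; rw [h0] at h1; norm_num at h1
          · intro h1
            rcases ht01 j ω with h0 | h1'
            · exact h0
            · exact absurd h1' h1
        have hmeas1 : MeasurableSet {ω | t j ω = 1} :=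
          (htmeas j) (measurableSet_singleton 1)
        rw [ht0set, measure_compl hmeas1 (measure_ne_top _ _), measure_univ, htdist j,
          ← ENNReal.ofReal_one, ← ENNReal.ofReal_sub _ hη.1.le]
    rw [Finset.prod_congr rfl hval]
    rw [Finset.prod_Icc_succ_top (by omega : 1 ≤ k + 1), if_pos rfl]
    have hrest : ∀ j ∈ Finset.Icc 1 k,
        (if j = k + 1 then ENNReal.ofReal η else ENNReal.ofReal (1 - η))
          = ENNReal.ofReal (1 - η) := by
      intro j hj
      rw [if_neg (by simp only [Finset.mem_Icc] at hj; omega)]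
    rw [Finset.prod_congr rfl hrest, Finset.prod_const, Nat.card_Icc]
    rw [show k + 1 - 1 = k from by omega]
    rw [← ENNReal.ofReal_pow (by linarith [hη.2] : (0:ℝ) ≤ 1 - η),
      ← ENNReal.ofReal_mul (pow_nonneg (by linarith [hη.2] : (0:ℝ) ≤ 1 - η) k)]
  -- final computation
  have hterm : ∀ k : ℕ, ℙ (C (k + 1) ∩ A (k + 1)) ≠ ⊤ := fun k => measure_ne_top _ _
  rw [ENNReal.tsum_toReal_eq hterm]
  have hAp : ∀ k, p k = (ℙ (A k)).toReal := fun k => hp k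
  apply tsum_congr
  intro k
  rw [hprod, hCmeasure, ENNReal.toReal_mul, ENNReal.toReal_ofReal
    (mul_nonneg (pow_nonneg (by linarith [hη.2] : (0:ℝ) ≤ 1 - η) k) hη.1.le)]

  rw [hAp (k + 1)]
end Core
end

section
/- For every integer n ≥ 1, the coverage probability with n-layer SIC capability — the probability that there exist integers l and k with 0 ≤ l ≤ n−1, k ≥ 1 and t_k = 1 such that ξ_i^{−1} > θ I_i for all 1 ≤ i ≤ l and ξ_k^{−1} > θ I_l^{!k} — is at least Σ_{k=1}^n (1−η)^{k−1} · η · p_k, and equality holds when θ ≥ 1. -/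
open MeasureTheory ProbabilityTheory Real
open Filter Topology

/-- A pointwise `tsum` of measurable real functions is measurable (w.r.t. any σ-algebra on the
domain). -/
theorem sic_measurable_tsum {Ω : Type*} {M : MeasurableSpace Ω} (f : ℕ → Ω → ℝ)
    (hf : ∀ j, Measurable[M] (f j)) : Measurable[M] fun ω => ∑' j, f j ω := by
  classical
  have hsummeq : ∀ ω : Ω, (Summable fun j => f j ω) ↔ ∀ k : ℕ, ∃ N : Finset ℕ,
      ∀ A B : Finset ℕ, N ⊆ A → N ⊆ B →
        |(∑ j ∈ A, f j ω) - ∑ j ∈ B, f j ω| < ((k : ℝ) + 1)⁻¹ := by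
    intro ω
    rw [summable_iff_cauchySeq_finset, Metric.cauchySeq_iff]
    constructor
    · intro h k
      obtain ⟨N, hN⟩ := h (((k : ℝ) + 1)⁻¹) (by positivity)
      exact ⟨N, fun A B hA hB => by simpa [Real.dist_eq] using hN A hA B hB⟩
    · intro h ε hε
      obtain ⟨k, hk⟩ := exists_nat_one_div_lt hε
      obtain ⟨N, hN⟩ := h k
      refine ⟨N, fun A hA B hB => ?_⟩
      rw [Real.dist_eq]
      refine lt_trans (hN A B hA hB) ?_
      rwa [inv_eq_one_div]
  have hset : MeasurableSet[M] {ω | Summable fun j => f j ω} := by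
    have hrw : {ω | Summable fun j => f j ω} = ⋂ (k : ℕ), ⋃ (N : Finset ℕ),
        ⋂ (A : Finset ℕ) (B : Finset ℕ) (_ : N ⊆ A) (_ : N ⊆ B),
          {ω | |(∑ j ∈ A, f j ω) - ∑ j ∈ B, f j ω| < ((k : ℝ) + 1)⁻¹} := by
      ext ω
      simp only [Set.mem_setOf_eq, Set.mem_iInter, Set.mem_iUnion]
      exact hsummeq ω
    rw [hrw]
    refine MeasurableSet.iInter fun k => MeasurableSet.iUnion fun N =>
      MeasurableSet.iInter fun A => MeasurableSet.iInter fun B =>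
      MeasurableSet.iInter fun _ => MeasurableSet.iInter fun _ => ?_
    have h1 : Measurable[M] fun ω => |(∑ j ∈ A, f j ω) - ∑ j ∈ B, f j ω| :=
      ((Finset.measurable_sum A fun j _ => hf j).sub
        (Finset.measurable_sum B fun j _ => hf j)).abs
    exact measurableSet_lt h1 measurable_const
  have htend : Tendsto
      (fun (n : ℕ) (ω : Ω) =>
        if Summable (fun j => f j ω) then ∑ j ∈ Finset.range n, f j ω else 0)
      atTop (𝓝 fun ω => ∑' j, f j ω) := by
    rw [tendsto_pi_nhds]
    intro ω
    by_cases h : Summable fun j => f j ω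
    · simp only [h, if_true]
      exact h.hasSum.tendsto_sum_nat
    · simp only [h, if_false]
      rw [tsum_eq_zero_of_not_summable h]
      exact tendsto_const_nhds
  exact measurable_of_tendsto_metrizable
    (fun n => Measurable.ite hset (Finset.measurable_sum _ fun j _ => hf j) measurable_const)
    htend

/-- Reindexing a sum over a cofinite subtype of `ℕ` given by a shifted condition. -/
theorem sic_tsum_subtype (g : ℕ → ℝ) (l k m : ℕ)
    (h : ∀ j : ℕ, (l + 1 ≤ j ∧ j ≠ k) ↔ m + 1 ≤ j) :
    ∑' j : {j : ℕ // l + 1 ≤ j ∧ j ≠ k}, g j = ∑' j : ℕ, g (m + 1 + j) := by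
  let e : ℕ ≃ {j : ℕ // l + 1 ≤ j ∧ j ≠ k} :=
    { toFun := fun a => ⟨m + 1 + a, (h _).mpr (by omega)⟩
      invFun := fun j => j.1 - (m + 1)
      left_inv := fun a => by show m + 1 + a - (m + 1) = a; omega
      right_inv := fun j => by
        have hj := (h j.1).mp j.2
        exact Subtype.ext (show m + 1 + (j.1 - (m + 1)) = j.1 by omega)
      }
  calc ∑' j : {j : ℕ // l + 1 ≤ j ∧ j ≠ k}, g j
      = ∑' a : ℕ, g ((e a : {j : ℕ // l + 1 ≤ j ∧ j ≠ k}) : ℕ) :=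
        (e.tsum_eq (fun j : {j : ℕ // l + 1 ≤ j ∧ j ≠ k} => g j)).symm
    _ = ∑' a : ℕ, g (m + 1 + a) := rfl

/-- Measurability of the successful-decoding event. -/
theorem sic_measurableSet_D {Ω : Type*} {M : MeasurableSpace Ω} (θ : ℝ) (ξ I : ℕ → Ω → ℝ)
    (hξ : ∀ i, Measurable[M] (ξ i)) (hI : ∀ i, Measurable[M] (I i)) (m : ℕ) :
    MeasurableSet[M] {ω | ∀ i, 1 ≤ i → i ≤ m → θ * I i ω < (ξ i ω)⁻¹} := by
  have hrw : {ω | ∀ i, 1 ≤ i → i ≤ m → θ * I i ω < (ξ i ω)⁻¹} =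
      ⋂ (i : ℕ), {ω | 1 ≤ i → i ≤ m → θ * I i ω < (ξ i ω)⁻¹} := by
    ext ω; simp only [Set.mem_setOf_eq, Set.mem_iInter]
  rw [hrw]
  refine MeasurableSet.iInter fun i => ?_
  rcases Classical.em (1 ≤ i ∧ i ≤ m) with ⟨h1, h2⟩ | h
  · have : {ω : Ω | 1 ≤ i → i ≤ m → θ * I i ω < (ξ i ω)⁻¹} =
        {ω | θ * I i ω < (ξ i ω)⁻¹} := by
      ext ω; simp [h1, h2]
    rw [this]
    exact measurableSet_lt ((hI i).const_mul θ) ((hξ i).inv)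
  · have : {ω : Ω | 1 ≤ i → i ≤ m → θ * I i ω < (ξ i ω)⁻¹} = Set.univ := by
      ext ω
      simp only [Set.mem_setOf_eq, Set.mem_univ, iff_true]
      intro hh1 hh2
      exact absurd ⟨hh1, hh2⟩ h
    rw [this]
    exact MeasurableSet.univ

/-- If the partial sums grow linearly, the inverse `1/β` powers are summable. -/
theorem sic_summable_of_tendsto (β c : ℝ) (hβ0 : 0 < β) (hβ1 : β < 1) (hc : 0 < c)
    (T : ℕ → ℝ) (hTnn : ∀ n, 0 ≤ T n)
    (hT : Tendsto (fun n : ℕ => T n / n) atTop (𝓝 c)) :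
    Summable fun j => ((T j) ^ (1 / β : ℝ))⁻¹ := by
  have hb : (1 : ℝ) < 1 / β := by
    rw [lt_div_iff₀ hβ0]; linarith
  have hev : ∀ᶠ n : ℕ in atTop, c / 2 < T n / n :=
    hT.eventually (eventually_gt_nhds (by linarith))
  obtain ⟨N0, hN0⟩ := eventually_atTop.mp hev
  set M := max N0 1 with hM
  set K := ((c / 2) ^ (1 / β : ℝ))⁻¹ with hK
  have hbase : Summable fun n : ℕ => (((n : ℝ)) ^ (1 / β : ℝ))⁻¹ :=
    Real.summable_nat_rpow_inv.mpr hb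
  have hshift : Summable fun j : ℕ => K * ((((j + M : ℕ) : ℝ)) ^ (1 / β : ℝ))⁻¹ :=
    (summable_nat_add_iff M).mpr (hbase.mul_left K)
  refine (summable_nat_add_iff M).mp (Summable.of_nonneg_of_le (fun j => ?_) (fun j => ?_) hshift)
  · exact inv_nonneg.mpr (Real.rpow_nonneg (hTnn _) _)
  · have hjM1 : 1 ≤ j + M := le_trans (le_max_right N0 1) (Nat.le_add_left M j)
    have hnpos : (0 : ℝ) < ((j + M : ℕ) : ℝ) := by
      exact_mod_cast Nat.lt_of_lt_of_le Nat.zero_lt_one hjM1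
    have hTn : c / 2 < T (j + M) / ((j + M : ℕ) : ℝ) :=
      hN0 _ (le_trans (le_max_left N0 1) (Nat.le_add_left M j))
    have h1 : c / 2 * ((j + M : ℕ) : ℝ) < T (j + M) := (lt_div_iff₀ hnpos).mp hTn
    have h2 : (0 : ℝ) < c / 2 * ((j + M : ℕ) : ℝ) := by positivity
    have h3 : (c / 2 * ((j + M : ℕ) : ℝ)) ^ (1 / β : ℝ) ≤ (T (j + M)) ^ (1 / β : ℝ) :=
      Real.rpow_le_rpow h2.le h1.le (by positivity)
    have h4 : (0 : ℝ) < (c / 2 * ((j + M : ℕ) : ℝ)) ^ (1 / β : ℝ) :=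
      Real.rpow_pos_of_pos h2 _
    calc ((T (j + M)) ^ (1 / β : ℝ))⁻¹
        ≤ ((c / 2 * ((j + M : ℕ) : ℝ)) ^ (1 / β : ℝ))⁻¹ := inv_anti₀ h4 h3
      _ = K * ((((j + M : ℕ) : ℝ)) ^ (1 / β : ℝ))⁻¹ := by
          rw [Real.mul_rpow (by positivity) (by positivity), mul_inv]

/-- the coverage probability with `n`-layer SIC capability is at least
`Σ_{k=1}^n (1−η)^{k−1} η p_k`, with equality when `θ ≥ 1`. -/
theorem sic_hcn_coverage_finite
    {Ω : Type*} [MeasureSpace Ω] [IsProbabilityMeasure (ℙ : Measure Ω)]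
    (β θ η : ℝ) (hβ : β ∈ Set.Ioo (0:ℝ) 1) (hθ : 0 < θ) (hη : η ∈ Set.Ioc (0:ℝ) 1)
    (E : ℕ → Ω → ℝ) (hEmeas : ∀ i, Measurable (E i))
    -- Bernoulli marks: t k = 1 iff the k-th strongest BS is accessible
    (t : ℕ → Ω → ℝ) (htmeas : ∀ k, Measurable (t k))
    (ht01 : ∀ k ω, t k ω = 0 ∨ t k ω = 1)
    (htdist : ∀ k, ℙ {ω | t k ω = 1} = ENNReal.ofReal η)
    -- the E's and t's are jointly independent
    (hindep : iIndepFun (Sum.elim E t) ℙ)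
    (hEdist : ∀ i, ∀ x : ℝ, 0 ≤ x → ℙ {ω | x < E i ω} = ENNReal.ofReal (Real.exp (-x)))
    (ξ : ℕ → Ω → ℝ)
    (hξ : ∀ k ω, ξ k ω = (∑ i ∈ Finset.range k, E i ω) ^ (1/β : ℝ))
    (I : ℕ → Ω → ℝ) (hI : ∀ k ω, I k ω = ∑' j : ℕ, (ξ (k + 1 + j) ω)⁻¹)
    -- I_l^{!k} = Σ_{j ≥ l+1, j ≠ k} ξ_j⁻¹
    (J : ℕ → ℕ → Ω → ℝ)
    (hJ : ∀ l k ω, J l k ω = ∑' j : {j : ℕ // l + 1 ≤ j ∧ j ≠ k}, (ξ j ω)⁻¹)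
    (p : ℕ → ℝ)
    (hp : ∀ k, p k = (ℙ {ω | ∀ i, 1 ≤ i → i ≤ k → θ * I i ω < (ξ i ω)⁻¹}).toReal)
    (n : ℕ) (hn : 1 ≤ n) :
    ∑ k ∈ Finset.range n, (1 - η) ^ (k : ℕ) * η * p (k + 1)
      ≤ (ℙ {ω | ∃ l k : ℕ, l ≤ n - 1 ∧ 1 ≤ k ∧ t k ω = 1
          ∧ (∀ i, 1 ≤ i → i ≤ l → θ * I i ω < (ξ i ω)⁻¹)
          ∧ θ * J l k ω < (ξ k ω)⁻¹}).toReal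
    ∧ (1 ≤ θ →
      (ℙ {ω | ∃ l k : ℕ, l ≤ n - 1 ∧ 1 ≤ k ∧ t k ω = 1
          ∧ (∀ i, 1 ≤ i → i ≤ l → θ * I i ω < (ξ i ω)⁻¹)
          ∧ θ * J l k ω < (ξ k ω)⁻¹}).toReal
        = ∑ k ∈ Finset.range n, (1 - η) ^ (k : ℕ) * η * p (k + 1)) := by
  classical
  obtain ⟨hβ0, hβ1⟩ := hβ
  obtain ⟨hη0, hη1⟩ := hη
  have h1η : (0:ℝ) ≤ 1 - η := by linarith
  set A : Set Ω := {ω | ∃ l k : ℕ, l ≤ n - 1 ∧ 1 ≤ k ∧ t k ω = 1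
      ∧ (∀ i, 1 ≤ i → i ≤ l → θ * I i ω < (ξ i ω)⁻¹)
      ∧ θ * J l k ω < (ξ k ω)⁻¹} with hAdef
  set Dset : ℕ → Set Ω := fun m => {ω | ∀ i, 1 ≤ i → i ≤ m → θ * I i ω < (ξ i ω)⁻¹}
    with hDdef
  set Cset : ℕ → Set Ω := fun m =>
      ⋂ i ∈ Finset.Icc 1 m, {ω | t i ω = if i = m then 1 else 0} with hCdef
  set Bset : ℕ → Set Ω := fun m => Dset m ∩ Cset m with hBdef
  set U : Set Ω := ⋃ k ∈ Finset.range n, Bset (k + 1) with hUdef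
  -- basic measurabilities (generic in the σ-algebra on Ω)
  have hξmeas : ∀ (M : MeasurableSpace Ω), (∀ i, Measurable[M] (E i)) →
      ∀ i, Measurable[M] (ξ i) := by
    intro M hE i
    have : ξ i = fun ω => (∑ j ∈ Finset.range i, E j ω) ^ (1/β : ℝ) :=
      funext fun ω => hξ i ω
    rw [this]
    exact (Finset.measurable_sum _ fun j _ => hE j).pow measurable_const
  have hImeas : ∀ (M : MeasurableSpace Ω), (∀ i, Measurable[M] (E i)) →
      ∀ i, Measurable[M] (I i) := by
    intro M hE i
    have : I i = fun ω => ∑' j, (ξ (i + 1 + j) ω)⁻¹ := funext fun ω => hI i ω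
    rw [this]
    exact sic_measurable_tsum _ fun j => ((hξmeas M hE) _).inv
  have hDmeasM : ∀ (M : MeasurableSpace Ω), (∀ i, Measurable[M] (E i)) →
      ∀ m, MeasurableSet[M] (Dset m) := by
    intro M hE m
    exact sic_measurableSet_D θ ξ I (hξmeas M hE) (hImeas M hE) m
  have hDmeas : ∀ m, MeasurableSet (Dset m) := hDmeasM _ hEmeas
  have htset : ∀ (i : ℕ) (c : ℝ), MeasurableSet {ω | t i ω = c} := fun i c =>
    (htmeas i) (measurableSet_singleton c)
  have hCmeas : ∀ m, MeasurableSet (Cset m) := fun m =>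
    Set.Finite.measurableSet_biInter (Finset.Icc 1 m).finite_toSet
      (fun i _ => htset i _)
  have hBmeas : ∀ m, MeasurableSet (Bset m) := fun m => (hDmeas m).inter (hCmeas m)
  -- reading off membership in Cset
  have hCval : ∀ m ω, ω ∈ Cset m → ∀ i, 1 ≤ i → i ≤ m → t i ω = if i = m then 1 else 0 := by
    intro m ω hω i h1 h2
    exact Set.mem_iInter₂.mp hω i (Finset.mem_Icc.mpr ⟨h1, h2⟩)
  -- disjointness
  have hdisjkey : ∀ a b : ℕ, a < b → Disjoint (Bset (a + 1)) (Bset (b + 1)) := by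
    intro a b hab
    rw [Set.disjoint_left]
    intro ω hωa hωb
    have h1 : t (a + 1) ω = 1 := by
      have := hCval (a + 1) ω hωa.2 (a + 1) (by omega) le_rfl
      rwa [if_pos rfl] at this
    have h0 : t (a + 1) ω = 0 := by
      have := hCval (b + 1) ω hωb.2 (a + 1) (by omega) (by omega)
      rwa [if_neg (by omega)] at this
    rw [h1] at h0
    exact one_ne_zero h0
  have hdisj : (↑(Finset.range n) : Set ℕ).PairwiseDisjoint fun k => Bset (k + 1) := by
    intro a _ b _ hab
    rcases lt_or_gt_of_ne hab with h | h
    · exact hdisjkey a b h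
    · exact (hdisjkey b a h).symm
  -- probability of the t-part
  have ht0 : ∀ i, ℙ {ω | t i ω = (0:ℝ)} = ENNReal.ofReal (1 - η) := by
    intro i
    have hcomp : {ω | t i ω = (0:ℝ)} = {ω | t i ω = 1}ᶜ := by
      ext ω
      simp only [Set.mem_setOf_eq, Set.mem_compl_iff]
      constructor
      · intro h h1; rw [h] at h1; exact zero_ne_one h1
      · intro h; rcases ht01 i ω with h0 | h1
        · exact h0
        · exact absurd h1 h
    rw [hcomp, measure_compl (htset i 1) (measure_ne_top _ _), htdist i, measure_univ,
      ENNReal.ofReal_sub 1 hη0.le, ENNReal.ofReal_one]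
  have hCprob : ∀ K : ℕ, ℙ (Cset (K + 1)) =
      (ENNReal.ofReal (1 - η)) ^ K * ENNReal.ofReal η := by
    intro K
    set sfam : ℕ ⊕ ℕ → Set Ω := fun x =>
      Sum.elim (fun _ => (Set.univ : Set Ω))
        (fun i => {ω | t i ω = if i = K + 1 then 1 else 0}) x with hsfam
    have hsub : ∀ x ∈ (Finset.Icc 1 (K + 1)).image Sum.inr,
        MeasurableSet[MeasurableSpace.comap (Sum.elim E t x) inferInstance] (sfam x) := by
      intro x hx
      obtain ⟨i, hi, rfl⟩ := Finset.mem_image.mp hx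
      exact ⟨{if i = K + 1 then 1 else 0}, measurableSet_singleton _, rfl⟩
    have hmeq := hindep.meas_biInter hsub
    have hseteq : (⋂ x ∈ (Finset.Icc 1 (K + 1)).image Sum.inr, sfam x) = Cset (K + 1) := by
      ext ω
      simp only [Set.mem_iInter, Finset.mem_image, hCdef, hsfam]
      constructor
      · intro h i hi
        have := h (Sum.inr i) ⟨i, hi, rfl⟩
        simpa using this
      · rintro h x ⟨i, hi, rfl⟩
        simpa using h i hi
    have hprod : ∏ x ∈ (Finset.Icc 1 (K + 1)).image Sum.inr, ℙ (sfam x) =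
        ∏ i ∈ Finset.Icc 1 (K + 1), ℙ {ω | t i ω = if i = K + 1 then 1 else 0} := by
      rw [Finset.prod_image (fun a _ b _ h => Sum.inr_injective h)]
      rfl
    have hval : ∏ i ∈ Finset.Icc 1 (K + 1), ℙ {ω | t i ω = if i = K + 1 then 1 else 0} =
        (ENNReal.ofReal (1 - η)) ^ K * ENNReal.ofReal η := by
      rw [Finset.prod_Icc_succ_top (by omega : 1 ≤ K + 1)]
      have h1 : ∀ i ∈ Finset.Icc 1 K,
          ℙ {ω | t i ω = if i = K + 1 then 1 else 0} = ENNReal.ofReal (1 - η) := by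
        intro i hi
        have hne : i ≠ K + 1 := by
          have := Finset.mem_Icc.mp hi; omega
        rw [if_neg hne]
        exact ht0 i
      rw [Finset.prod_congr rfl h1, Finset.prod_const, Nat.card_Icc, if_pos rfl, htdist]
      norm_num
    rw [← hseteq, hmeq, hprod, hval]
  -- independence of the D-part and C-part
  have hblockle : ∀ s : ℕ ⊕ ℕ,
      MeasurableSpace.comap (Sum.elim E t s) inferInstance ≤
        (inferInstance : MeasurableSpace Ω) := by
    intro s
    cases s with
    | inl i => exact measurable_iff_comap_le.mp (hEmeas i)
    | inr i => exact measurable_iff_comap_le.mp (htmeas i)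
  have hblock := indep_biSup_compl hblockle hindep.iIndep (Set.range (Sum.inl : ℕ → ℕ ⊕ ℕ))
  have hEm' : ∀ i : ℕ,
      Measurable[⨆ x ∈ Set.range (Sum.inl : ℕ → ℕ ⊕ ℕ),
        MeasurableSpace.comap (Sum.elim E t x) inferInstance] (E i) := by
    intro i
    exact measurable_iff_comap_le.mpr
      (le_biSup (fun x : ℕ ⊕ ℕ => MeasurableSpace.comap (Sum.elim E t x) inferInstance)
        (show (Sum.inl i : ℕ ⊕ ℕ) ∈ Set.range (Sum.inl : ℕ → ℕ ⊕ ℕ) from ⟨i, rfl⟩))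
  have htm' : ∀ i : ℕ,
      Measurable[⨆ x ∈ (Set.range (Sum.inl : ℕ → ℕ ⊕ ℕ))ᶜ,
        MeasurableSpace.comap (Sum.elim E t x) inferInstance] (t i) := by
    intro i
    exact measurable_iff_comap_le.mpr
      (le_biSup (fun x : ℕ ⊕ ℕ => MeasurableSpace.comap (Sum.elim E t x) inferInstance)
        (show (Sum.inr i : ℕ ⊕ ℕ) ∈ (Set.range (Sum.inl : ℕ → ℕ ⊕ ℕ))ᶜ by simp))
  have hindepDC : ∀ m, ℙ (Dset m ∩ Cset m) = ℙ (Dset m) * ℙ (Cset m) := by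
    intro m
    have hD' := hDmeasM _ hEm' m
    have hC' : MeasurableSet[⨆ x ∈ (Set.range (Sum.inl : ℕ → ℕ ⊕ ℕ))ᶜ,
        MeasurableSpace.comap (Sum.elim E t x) inferInstance] (Cset m) := by
      refine Set.Finite.measurableSet_biInter (Finset.Icc 1 m).finite_toSet fun i _ => ?_
      exact (htm' i) (measurableSet_singleton _)
    exact (hblock.indepSet_of_measurableSet hD' hC').measure_inter_eq_mul
  -- probability of each Bset
  have hPB : ∀ K : ℕ, ℙ (Bset (K + 1)) =
      ENNReal.ofReal ((1 - η) ^ K * η) * ℙ (Dset (K + 1)) := by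
    intro K
    have : ℙ (Bset (K + 1)) = ℙ (Dset (K + 1)) * ℙ (Cset (K + 1)) := hindepDC (K + 1)
    rw [this, hCprob K, ENNReal.ofReal_mul (pow_nonneg h1η K), ENNReal.ofReal_pow h1η]
    ring
  have hPBtoReal : ∀ K : ℕ, (ℙ (Bset (K + 1))).toReal = (1 - η) ^ K * η * p (K + 1) := by
    intro K
    rw [hPB, ENNReal.toReal_mul,
      ENNReal.toReal_ofReal (mul_nonneg (pow_nonneg h1η K) hη0.le), hp]
  -- measure of the union
  have hPU : ℙ U = ∑ k ∈ Finset.range n, ℙ (Bset (k + 1)) :=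
    measure_biUnion_finset hdisj fun k _ => hBmeas _
  have hPUtoReal : (ℙ U).toReal = ∑ k ∈ Finset.range n, (1 - η) ^ k * η * p (k + 1) := by
    rw [hPU, ENNReal.toReal_sum fun a _ => measure_ne_top _ _]
    exact Finset.sum_congr rfl fun k _ => hPBtoReal k
  -- reindexing identities for J
  have hJI1 : ∀ (l : ℕ) (ω : Ω), J l (l + 1) ω = I (l + 1) ω := by
    intro l ω
    rw [hJ, hI]
    exact sic_tsum_subtype (fun j => (ξ j ω)⁻¹) l (l + 1) (l + 1) (fun j => by omega)
  -- lower bound: U ⊆ A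
  have hUA : U ⊆ A := by
    intro ω hω
    obtain ⟨k, hk, hωB⟩ := Set.mem_iUnion₂.mp hω
    obtain ⟨hωD, hωC⟩ := hωB
    have hkn : k < n := Finset.mem_range.mp hk
    refine ⟨k, k + 1, by omega, by omega, ?_, ?_, ?_⟩
    · have := hCval (k + 1) ω hωC (k + 1) (by omega) le_rfl
      rwa [if_pos rfl] at this
    · intro i h1 h2
      exact hωD i h1 (by omega)
    · rw [hJI1 k ω]
      exact hωD (k + 1) (by omega) le_rfl
  have hlow : ∑ k ∈ Finset.range n, (1 - η) ^ k * η * p (k + 1) ≤ (ℙ A).toReal := by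
    rw [← hPUtoReal]
    exact ENNReal.toReal_mono (measure_ne_top _ _) (measure_mono hUA)
  refine ⟨hlow, ?_⟩
  -- equality when θ ≥ 1
  intro hθ1
  -- null sets
  have hEposset : ∀ i, ℙ {ω | ¬ (0 < E i ω)} = 0 := by
    intro i
    have hc : {ω | ¬ (0 < E i ω)} = {ω | 0 < E i ω}ᶜ := rfl
    have h0 : ℙ {ω | (0:ℝ) < E i ω} = 1 := by
      rw [hEdist i 0 le_rfl]
      simp
    rw [hc, measure_compl (measurableSet_lt measurable_const (hEmeas i)) (measure_ne_top _ _),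
      measure_univ, h0, tsub_self]
  have hae_pos : ∀ᵐ ω, 0 < E 0 ω := by
    rw [ae_iff]
    exact hEposset 0
  have hlint : ∫⁻ ω, ENNReal.ofReal (E 0 ω) ∂ℙ = 1 := by
    rw [lintegral_eq_lintegral_meas_lt ℙ (hae_pos.mono fun ω h => h.le)
      (hEmeas 0).aemeasurable]
    have hcongr : ∀ᵐ x ∂(volume : Measure ℝ), x ∈ Set.Ioi (0:ℝ) →
        ℙ {a | x < E 0 a} = ENNReal.ofReal (Real.exp (-x)) :=
      ae_of_all _ fun x hx => hEdist 0 x (le_of_lt hx)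
    rw [setLIntegral_congr_fun_ae measurableSet_Ioi hcongr]
    have hint : IntegrableOn (fun x : ℝ => Real.exp (-x)) (Set.Ioi (0:ℝ)) := by
      simpa using exp_neg_integrableOn_Ioi 0 one_pos
    rw [← ofReal_integral_eq_lintegral_ofReal hint
      (ae_of_all _ fun x => (Real.exp_pos _).le)]
    rw [integral_exp_neg_Ioi_zero, ENNReal.ofReal_one]
  have hintE : Integrable (E 0) ℙ := by
    refine ⟨(hEmeas 0).aestronglyMeasurable, ?_⟩
    rw [hasFiniteIntegral_iff_ofReal (hae_pos.mono fun ω h => h.le), hlint]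
    exact ENNReal.one_lt_top
  have hmean : ∫ ω, E 0 ω ∂ℙ = 1 := by
    rw [integral_eq_lintegral_of_nonneg_ae (hae_pos.mono fun ω h => h.le)
      (hEmeas 0).aestronglyMeasurable, hlint]
    rfl
  have hpair : Pairwise (Function.onFun (IndepFun · · ℙ) E) := by
    intro i j hij
    exact hindep.indepFun (show (Sum.inl i : ℕ ⊕ ℕ) ≠ Sum.inl j by simpa using hij)
  have hident : ∀ i, IdentDistrib (E i) (E 0) ℙ ℙ := by
    intro i
    refine ⟨(hEmeas i).aemeasurable, (hEmeas 0).aemeasurable, ?_⟩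
    haveI h1 : IsProbabilityMeasure (Measure.map (E i) ℙ) :=
      Measure.isProbabilityMeasure_map (hEmeas i).aemeasurable
    haveI h2 : IsProbabilityMeasure (Measure.map (E 0) ℙ) :=
      Measure.isProbabilityMeasure_map (hEmeas 0).aemeasurable
    have key : ∀ (j : ℕ) (a : ℝ), ℙ (E j ⁻¹' Set.Iic a) =
        if 0 ≤ a then 1 - ENNReal.ofReal (Real.exp (-a)) else 0 := by
      intro j a
      have hpre : E j ⁻¹' Set.Iic a = {ω | a < E j ω}ᶜ := by
        ext ω; simp [not_lt]
      rw [hpre, measure_compl (measurableSet_lt measurable_const (hEmeas j))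
        (measure_ne_top _ _), measure_univ]
      by_cases ha : 0 ≤ a
      · rw [if_pos ha, hEdist j a ha]
      · rw [if_neg ha]
        have h1 : ℙ {ω | a < E j ω} = 1 := by
          refine le_antisymm prob_le_one ?_
          have hone : ℙ {ω | (0:ℝ) < E j ω} = 1 := by rw [hEdist j 0 le_rfl]; simp
          rw [← hone]
          exact measure_mono fun ω h => lt_trans (lt_of_not_ge ha) h
        rw [h1, tsub_self]
    refine Measure.ext_of_Iic (Measure.map (E i) ℙ) (Measure.map (E 0) ℙ) fun a => ?_
    rw [Measure.map_apply (hEmeas i) measurableSet_Iic,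
      Measure.map_apply (hEmeas 0) measurableSet_Iic, key i a, key 0 a]
  have hslln := strong_law_ae_real E hintE hpair hident
  have hslln' : ∀ᵐ ω ∂(ℙ : Measure Ω),
      Tendsto (fun m : ℕ => (∑ i ∈ Finset.range m, E i ω) / m) atTop (𝓝 1) := by
    rw [show (1:ℝ) = ∫ ω, E 0 ω ∂ℙ from hmean.symm]
    exact hslln
  set Zset : Set Ω := {ω | ¬ (∀ i, 0 < E i ω)} ∪
      {ω | ¬ Tendsto (fun m : ℕ => (∑ i ∈ Finset.range m, E i ω) / m) atTop (𝓝 1)}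
    with hZdef
  have hZnull : ℙ Zset = 0 := by
    apply measure_union_null
    · refine measure_mono_null ?_ (measure_iUnion_null fun i => hEposset i)
      intro ω h
      obtain ⟨i, hi⟩ := not_forall.mp h
      exact Set.mem_iUnion.mpr ⟨i, hi⟩
    · exact ae_iff.mp hslln'
  -- inclusion A ⊆ U ∪ Zset
  have hAsub : A ⊆ U ∪ Zset := by
    intro ω hω
    by_cases hgood : (∀ i, 0 < E i ω) ∧
        Tendsto (fun m : ℕ => (∑ i ∈ Finset.range m, E i ω) / m) atTop (𝓝 1)
    · left
      obtain ⟨hEp, hTd⟩ := hgood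
      have hTnn : ∀ m : ℕ, 0 ≤ ∑ i ∈ Finset.range m, E i ω := fun m =>
        Finset.sum_nonneg fun i _ => (hEp i).le
      have hsum0 : Summable fun j => ((∑ i ∈ Finset.range j, E i ω) ^ (1/β : ℝ))⁻¹ :=
        sic_summable_of_tendsto β 1 hβ0 hβ1 one_pos _ hTnn hTd
      have hsum : Summable fun j => (ξ j ω)⁻¹ := by
        have heq : (fun j => (ξ j ω)⁻¹) =
            fun j => ((∑ i ∈ Finset.range j, E i ω) ^ (1/β : ℝ))⁻¹ :=
          funext fun j => by rw [hξ]
        rw [heq]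
        exact hsum0
      have hξnn : ∀ j, 0 ≤ ξ j ω := fun j => by
        rw [hξ]; exact Real.rpow_nonneg (hTnn j) _
      have hξpos : ∀ j, 1 ≤ j → 0 < ξ j ω := by
        intro j hj
        rw [hξ]
        refine Real.rpow_pos_of_pos ?_ _
        refine Finset.sum_pos (fun i _ => hEp i) ?_
        rw [Finset.nonempty_range_iff]
        omega
      have hanti : ∀ a b, 1 ≤ a → a ≤ b → (ξ b ω)⁻¹ ≤ (ξ a ω)⁻¹ := by
        intro a b ha hab
        refine inv_anti₀ (hξpos a ha) ?_
        rw [hξ, hξ]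
        exact Real.rpow_le_rpow (hTnn a)
          (Finset.sum_le_sum_of_subset_of_nonneg (Finset.range_subset_range.mpr hab)
            (fun i _ _ => (hEp i).le)) (by positivity)
      obtain ⟨l, kk, hln, hkk1, htkk, hPl, hJlt⟩ := hω
      have hJnn : 0 ≤ J l kk ω := by
        rw [hJ]
        exact tsum_nonneg fun j => inv_nonneg.mpr (hξnn j)
      have hkklE : kk ≤ l + 1 := by
        by_contra hgt
        push_neg at hgt
        have hne : l + 1 ≠ kk := by omega
        have hsub : Summable ((fun j => (ξ j ω)⁻¹) ∘
            ((↑) : {j : ℕ | l + 1 ≤ j ∧ j ≠ kk} → ℕ)) :=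
          hsum.subtype {j : ℕ | l + 1 ≤ j ∧ j ≠ kk}
        have hge : (ξ (l + 1) ω)⁻¹ ≤ J l kk ω := by
          rw [hJ]
          exact Summable.le_tsum hsub ⟨l + 1, le_rfl, hne⟩
            (fun j _ => inv_nonneg.mpr (hξnn j))
        have h1 : (ξ kk ω)⁻¹ ≤ (ξ (l + 1) ω)⁻¹ := hanti (l + 1) kk (by omega) (by omega)
        have h2 : J l kk ω ≤ θ * J l kk ω := le_mul_of_one_le_left hJnn hθ1
        linarith
      have hex : ∃ m, 1 ≤ m ∧ t m ω = 1 := ⟨kk, hkk1, htkk⟩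
      set m := Nat.find hex with hm
      obtain ⟨hm1, htm⟩ := Nat.find_spec hex
      have hmle : m ≤ kk := Nat.find_le ⟨hkk1, htkk⟩
      have hmlen : m ≤ n := by omega
      have hDm : ω ∈ Dset m := by
        intro i h1 h2
        rcases le_or_gt i l with hil | hil
        · exact hPl i h1 hil
        · have him : i = l + 1 := by omega
          have hkkeq : kk = l + 1 := by omega
          rw [him]
          have hcopy := hJlt
          rw [hkkeq, hJI1 l ω] at hcopy
          exact hcopy
      have hCm : ω ∈ Cset m := by
        refine Set.mem_iInter₂.mpr fun i hi => ?_
        obtain ⟨hi1, him⟩ := Finset.mem_Icc.mp hi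
        by_cases heq : i = m
        · rw [if_pos heq, heq]
          exact htm
        · rw [if_neg heq]
          have hlt : i < m := by omega
          have hmin := Nat.find_min hex hlt
          rcases ht01 i ω with h0 | h1
          · exact h0
          · exact absurd ⟨hi1, h1⟩ hmin
      have hm1eq : m - 1 + 1 = m := by omega
      refine Set.mem_iUnion₂.mpr ⟨m - 1, Finset.mem_range.mpr (by omega), ?_⟩
      rw [hm1eq]
      exact ⟨hDm, hCm⟩
    · right
      by_cases h1 : ∀ i, 0 < E i ω
      · right
        exact fun hT => hgood ⟨h1, hT⟩
      · left
        exact h1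
  have hup : ℙ A ≤ ℙ U := by
    refine le_trans (measure_mono hAsub) ?_
    refine le_trans (measure_union_le _ _) ?_
    rw [hZnull, add_zero]
  refine le_antisymm ?_ hlow
  rw [← hPUtoReal]
  exact ENNReal.toReal_mono (measure_ne_top _ _) hup
end
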